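/- arXiv:1807.10909 — 3 statements merged into one kernel-verified Lean document; each statement's English description precedes it below -/
import Mathlib

section
/- Let s > 0 and assume ℱ satisfies assumptions (III) and (V). Let r ∈ (0, min(s,1)). If a = {a_k}_{k∈ℤ} and b = {b_{j,k}}_{j∈ℕ,k∈ℤ} satisfy C_a := sup_k |a_k| < ∞ and C_b := sup_{j∈ℕ} 2^{j(r+1/2)} sup_k |b_{j,k}| < ∞, then the function f(x) = Σ_{k∈ℤ} a_k φ_k(x) + Σ_{j∈ℕ} Σ_{k∈ℤ} b_{j,k} ψ_{j,k}(x) is well defined (at each point the φ-sum is finite and the ψ-sum converges absolutely), f is bounded, f is α-Hölder with exponent r, and there is a constant C > 0 depending only on r and the constants in (III) and (V) such that ‖f‖_∞ + sup_{x,h≠0}|f(x+h)−f(x)|/|h|^r ≤ C·max(C_a, C_b). In particular f ∈ B^r_{∞,∞}(ℝ). -/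
open MeasureTheory Filter ENNReal

noncomputable section

namespace FrameReg

/-- A real-valued function on `ℝ` is bounded. -/
def Bdd (f : ℝ → ℝ) : Prop := ∃ M : ℝ, ∀ x, |f x| ≤ M

/-- Membership in the Zygmund class `Λ(ℝ)`. -/
def MemZygmundClass (g : ℝ → ℝ) : Prop :=
  ∃ M : ℝ, ∀ x h : ℝ, 0 < h → |g (x + h) - 2 * g x + g (x - h)| ≤ M * h

/-- The Hölder norm `‖f‖_{C^ρ}` (with `ρ = ⌊ρ⌋ + α`, `α ∈ [0,1)`) is bounded by `C`:
all derivatives up to order `⌊ρ⌋` are bounded by `C` and the `⌊ρ⌋`-th derivative is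
`α`-Hölder with constant `C`. -/
def HolderNormLE (ρ C : ℝ) (f : ℝ → ℝ) : Prop :=
  (∀ i : ℕ, i ≤ ⌊ρ⌋₊ → ∀ x : ℝ, |iteratedDeriv i f x| ≤ C) ∧
  ∀ x y : ℝ, x ≠ y →
    |iteratedDeriv ⌊ρ⌋₊ f x - iteratedDeriv ⌊ρ⌋₊ f y| ≤ C * |x - y| ^ (ρ - (⌊ρ⌋₊ : ℝ))

/-- Membership in the Hölder space `B^r_{∞,∞}(ℝ)` for noninteger `r > 0`,
written `r = ⌊r⌋ + α` with `α ∈ (0,1)`: a bounded `C^{⌊r⌋}` function whose `⌊r⌋`-th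
derivative is `α`-Hölder. -/
def MemHolderSpace (r : ℝ) (f : ℝ → ℝ) : Prop :=
  Bdd f ∧ ContDiff ℝ (⌊r⌋₊) f ∧
  ∃ M : ℝ, ∀ x h : ℝ, h ≠ 0 →
    |iteratedDeriv ⌊r⌋₊ f (x + h) - iteratedDeriv ⌊r⌋₊ f x| ≤ M * |h| ^ (r - (⌊r⌋₊ : ℝ))

/-- Membership in the Hölder–Zygmund space `B^n_{∞,∞}(ℝ)` for an integer `n ≥ 1`:
a bounded `C^{n-1}` function whose `(n-1)`-st derivative is in the Zygmund class. -/
def MemZygmundSpace (n : ℕ) (f : ℝ → ℝ) : Prop :=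
  Bdd f ∧ ContDiff ℝ ((n - 1 : ℕ)) f ∧ MemZygmundClass (iteratedDeriv (n - 1) f)

/-- Membership in the Hölder–Zygmund space `B^r_{∞,∞}(ℝ)`, `r > 0`. -/
def MemB (r : ℝ) (f : ℝ → ℝ) : Prop :=
  ((∀ n : ℕ, (n : ℝ) ≠ r) → MemHolderSpace r f) ∧
  ∀ n : ℕ, (n : ℝ) = r → MemZygmundSpace n f

/-- All elements of the family `ℱ` are compactly supported. -/
def CompactlySupported (φ : ℤ → ℝ → ℝ) (ψ : ℕ+ → ℤ → ℝ → ℝ) : Prop :=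
  (∀ k, HasCompactSupport (φ k)) ∧ ∀ j k, HasCompactSupport (ψ j k)

/-- Assumption (I): `ℱ` is a Parseval tight frame for `L²(ℝ)`, i.e. every `f ∈ L²(ℝ)`
equals `Σ_k ⟨f,φ_k⟩ φ_k + Σ_j Σ_k ⟨f,ψ_{j,k}⟩ ψ_{j,k}` with convergence in `L²`. -/
def AssumpI (φ : ℤ → ℝ → ℝ) (ψ : ℕ+ → ℤ → ℝ → ℝ)
    (hφ : ∀ k, MemLp (φ k) 2 (volume : Measure ℝ))
    (hψ : ∀ j k, MemLp (ψ j k) 2 (volume : Measure ℝ)) : Prop :=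
  ∀ f : Lp ℝ 2 (volume : Measure ℝ),
    HasSum (fun i : ℤ ⊕ ℕ+ × ℤ =>
      Sum.elim
        (fun k => (∫ x : ℝ, f x * φ k x) • (hφ k).toLp (φ k))
        (fun p => (∫ x : ℝ, f x * ψ p.1 p.2 x) • (hψ p.1 p.2).toLp (ψ p.1 p.2)) i) f

/-- Assumption (II): uniform bound on the measures of the supports. -/
def AssumpII (Csupp : ℝ) (φ : ℤ → ℝ → ℝ) (ψ : ℕ+ → ℤ → ℝ → ℝ) : Prop :=
  (∀ k, volume (Function.support (φ k)) ≤ ENNReal.ofReal Csupp) ∧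
  ∀ j k, volume (Function.support (ψ j k)) ≤
    ENNReal.ofReal (Csupp * (2:ℝ) ^ (-((j:ℕ):ℝ)))

/-- Assumption (III): control on the number of elements whose support meets a given
bounded interval. -/
def AssumpIII (CΓ : ℝ) (φ : ℤ → ℝ → ℝ) (ψ : ℕ+ → ℤ → ℝ → ℝ) : Prop :=
  ∀ a b : ℝ, a ≤ b →
    ({k : ℤ | (Function.support (φ k) ∩ Set.Icc a b).Nonempty}.Finite ∧
      (Nat.card {k : ℤ | (Function.support (φ k) ∩ Set.Icc a b).Nonempty} : ℝ) ≤
        CΓ * ((b - a) + 1)) ∧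
    ∀ j : ℕ+,
      {k : ℤ | (Function.support (ψ j k) ∩ Set.Icc a b).Nonempty}.Finite ∧
      (Nat.card {k : ℤ | (Function.support (ψ j k) ∩ Set.Icc a b).Nonempty} : ℝ) ≤
        CΓ * ((2:ℝ) ^ ((j:ℕ)) * (b - a) + 1)

/-- First part of assumption (IV): `v` vanishing moments. -/
def VanishingMoments (v : ℕ) (ψ : ℕ+ → ℤ → ℝ → ℝ) : Prop :=
  ∀ n : ℕ, n < v → ∀ (j : ℕ+) (k : ℤ), ∫ x : ℝ, x ^ n * ψ j k x = 0

/-- Second part of assumption (IV): localization of the framelets around the centers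
`xc j k`. -/
def Localization (v : ℕ) (ψ : ℕ+ → ℤ → ℝ → ℝ) (xc : ℕ+ → ℤ → ℝ) : Prop :=
  ∀ ρ : ℝ, 0 ≤ ρ → ρ ≤ (v : ℝ) → ∃ Cvm > (0:ℝ), ∀ (j : ℕ+) (k : ℤ),
    ∫ x : ℝ, |x| ^ ρ * |ψ j k (x + xc j k)| ≤ Cvm * (2:ℝ) ^ (-((j:ℕ):ℝ) * (ρ + 1/2))

/-- Assumption (V): `ℱ ⊂ C^s(ℝ)` together with quantitative bounds on the
Hölder norms `‖·‖_{C^ρ}` for all `0 ≤ ρ ≤ s`. -/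
def AssumpV (s : ℝ) (φ : ℤ → ℝ → ℝ) (ψ : ℕ+ → ℤ → ℝ → ℝ) : Prop :=
  (∀ k, ContDiff ℝ (⌊s⌋₊) (φ k)) ∧ (∀ j k, ContDiff ℝ (⌊s⌋₊) (ψ j k)) ∧
  ∀ ρ : ℝ, 0 ≤ ρ → ρ ≤ s → ∃ Csm > (0:ℝ),
    (∀ k, HolderNormLE ρ Csm (φ k)) ∧
    ∀ (j : ℕ+) (k : ℤ),
      HolderNormLE ρ (Csm * (2:ℝ) ^ (((j:ℕ):ℝ) * (ρ + 1/2))) (ψ j k)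

/-- The function `Σ_k a_k φ_k + Σ_j Σ_k b_{j,k} ψ_{j,k}`. -/
def frameSum (φ : ℤ → ℝ → ℝ) (ψ : ℕ+ → ℤ → ℝ → ℝ)
    (a : ℤ → ℝ) (b : ℕ+ → ℤ → ℝ) : ℝ → ℝ :=
  fun x => (∑' k : ℤ, a k * φ k x) + ∑' p : ℕ+ × ℤ, b p.1 p.2 * ψ p.1 p.2 x

/-- `f = Σ_k a_k φ_k + Σ_j Σ_k b_{j,k} ψ_{j,k}` pointwise, the `φ`-sum having finitely
many nonzero terms at each point and the `ψ`-sum converging absolutely. -/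
def Represents (φ : ℤ → ℝ → ℝ) (ψ : ℕ+ → ℤ → ℝ → ℝ)
    (a : ℤ → ℝ) (b : ℕ+ → ℤ → ℝ) (f : ℝ → ℝ) : Prop :=
  (∀ x : ℝ, {k : ℤ | φ k x ≠ 0}.Finite) ∧
  (∀ x : ℝ, Summable fun p : ℕ+ × ℤ => |b p.1 p.2 * ψ p.1 p.2 x|) ∧
  ∀ x : ℝ, f x = frameSum φ ψ a b x

/-- `(a,b) ∈ ℓ^r_{∞,∞}`: the norm
`max(sup_k |a_k|, sup_j 2^{j(r+1/2)} sup_k |b_{j,k}|)` is finite. -/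
def SeqNormFin (r : ℝ) (a : ℤ → ℝ) (b : ℕ+ → ℤ → ℝ) : Prop :=
  ∃ C : ℝ, (∀ k, |a k| ≤ C) ∧
    ∀ (j : ℕ+) (k : ℤ), (2:ℝ) ^ (((j:ℕ):ℝ) * (r + 1/2)) * |b j k| ≤ C

/-- Powers of a bi-infinite matrix (rows and columns indexed by `ℤ`). -/
def matPow (Z : ℤ → ℤ → ℝ) : ℕ → ℤ → ℤ → ℝ
  | 0 => fun m i => if m = i then 1 else 0
  | n + 1 => fun m i => ∑' p : ℤ, Z m p * matPow Z n p i

/-- The Besov norm `‖f‖_{B^r_{∞,∞}} = max(‖f‖_∞, sup_j 2^{jr} ω^{⌊r⌋+1}_∞(f,2^{-j}))`,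
valued in `ℝ≥0∞`. -/
def besovNorm (r : ℝ) (f : ℝ → ℝ) : ℝ≥0∞ :=
  max (⨆ x : ℝ, ENNReal.ofReal |f x|)
    (⨆ j : ℕ+, ENNReal.ofReal ((2:ℝ) ^ (((j:ℕ):ℝ) * r)) *
      ⨆ (h : ℝ) (_ : |h| ≤ (2:ℝ) ^ (-((j:ℕ):ℝ))) (x : ℝ),
        ENNReal.ofReal
          (abs (∑ l ∈ Finset.range (⌊r⌋₊ + 2),
            ((⌊r⌋₊ + 1).choose l : ℝ) * (-1) ^ (⌊r⌋₊ + 1 - l) * f (x + (l:ℝ) * h))))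

/-- The sequence norm `‖(a,b)‖_{ℓ^r_{∞,∞}}`, valued in `ℝ≥0∞`. -/
def seqNorm (r : ℝ) (a : ℤ → ℝ) (b : ℕ+ → ℤ → ℝ) : ℝ≥0∞ :=
  max (⨆ k : ℤ, ENNReal.ofReal |a k|)
    (⨆ j : ℕ+, ENNReal.ofReal ((2:ℝ) ^ (((j:ℕ):ℝ) * (r + 1/2))) *
      ⨆ k : ℤ, ENNReal.ofReal |b j k|)

end FrameReg

namespace FrameReg

private lemma FR_rpow_nat_mul (c : ℝ) (n : ℕ) : (2:ℝ) ^ ((n:ℝ) * c) = ((2:ℝ)^c)^n := by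
  rw [mul_comm, Real.rpow_mul (by norm_num), Real.rpow_natCast]

private lemma FR_tsum_pnat (f : ℕ+ → ℝ) : ∑' j, f j = ∑' n : ℕ, f n.succPNat :=
  (Equiv.pnatEquivNat.symm.tsum_eq f).symm

private lemma FR_summable_pnat {f : ℕ+ → ℝ} (h : Summable fun n : ℕ => f n.succPNat) :
    Summable f :=
  Equiv.pnatEquivNat.symm.summable_iff.mp h

private lemma FR_tsum_fiber {u : ℤ → ℝ} {T : Finset ℤ} {M N : ℝ}
    (h0 : ∀ k ∉ T, u k = 0) (hb : ∀ k, |u k| ≤ M) (hT : (T.card : ℝ) ≤ N) (hM : 0 ≤ M) :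
    Summable (fun k => |u k|) ∧ (∑' k, |u k|) ≤ N * M ∧ |∑' k, u k| ≤ N * M := by
  have h0' : ∀ k ∉ T, |u k| = 0 := fun k hk => by rw [h0 k hk, abs_zero]
  have hsum : Summable (fun k => |u k|) := summable_of_ne_finset_zero h0'
  have hle : (∑' k, |u k|) ≤ N * M := by
    rw [tsum_eq_sum h0']
    calc ∑ k ∈ T, |u k| ≤ T.card • M := Finset.sum_le_card_nsmul _ _ _ (fun k _ => hb k)
      _ = (T.card : ℝ) * M := nsmul_eq_mul _ _
      _ ≤ N * M := mul_le_mul_of_nonneg_right hT hM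
  have habs : |∑' k, u k| ≤ ∑' k, |u k| := by
    have := norm_tsum_le_tsum_norm (f := u) (by simp only [Real.norm_eq_abs]; exact hsum)
    simp only [Real.norm_eq_abs] at this
    exact this
  exact ⟨hsum, hle, habs.trans hle⟩

private lemma FR_supp_finset {G : ℤ → ℝ → ℝ} {x N : ℝ}
    (hfin : {k : ℤ | (Function.support (G k) ∩ Set.Icc x x).Nonempty}.Finite)
    (hcard : (Nat.card {k : ℤ | (Function.support (G k) ∩ Set.Icc x x).Nonempty} : ℝ) ≤ N) :
    ∃ T : Finset ℤ, (∀ k ∉ T, G k x = 0) ∧ ((T.card : ℝ) ≤ N) := by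
  refine ⟨hfin.toFinset, ?_, ?_⟩
  · intro k hk
    by_contra hne
    exact hk (by
      rw [Set.Finite.mem_toFinset]
      exact ⟨x, Function.mem_support.mpr hne, Set.mem_Icc.mpr ⟨le_rfl, le_rfl⟩⟩)
  · have hc : Nat.card {k : ℤ | (Function.support (G k) ∩ Set.Icc x x).Nonempty}
        = hfin.toFinset.card := by
      rw [Nat.card_coe_set_eq, Set.ncard_eq_toFinset_card _ hfin]
    rw [← hc]; exact hcard

set_option maxHeartbeats 2000000 in
/-- Proposition 2.2: under (III) and (V), bounded coefficient
sequences with decay `2^{-j(r+1/2)}` produce a bounded `r`-Hölder function, with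
norm controlled by `C·max(C_a, C_b)`. -/
theorem statement_2
    (φ : ℤ → ℝ → ℝ) (ψ : ℕ+ → ℤ → ℝ → ℝ)
    (hcs : CompactlySupported φ ψ)
    (s : ℝ) (hs : 0 < s)
    (CΓ : ℝ) (hCΓ : 0 < CΓ)
    (hIII : AssumpIII CΓ φ ψ)
    (hV : AssumpV s φ ψ)
    (r : ℝ) (hr : 0 < r) (hr' : r < min s 1) :
    ∃ C > (0:ℝ), ∀ (a : ℤ → ℝ) (b : ℕ+ → ℤ → ℝ) (Ca Cb : ℝ),
      (∀ k, |a k| ≤ Ca) →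
      (∀ (j : ℕ+) (k : ℤ), (2:ℝ) ^ (((j:ℕ):ℝ) * (r + 1/2)) * |b j k| ≤ Cb) →
      (∀ x : ℝ, {k : ℤ | φ k x ≠ 0}.Finite) ∧
      (∀ x : ℝ, Summable fun p : ℕ+ × ℤ => |b p.1 p.2 * ψ p.1 p.2 x|) ∧
      Bdd (frameSum φ ψ a b) ∧
      (∃ M : ℝ, ∀ x h : ℝ, h ≠ 0 →
        |frameSum φ ψ a b (x + h) - frameSum φ ψ a b x| ≤ M * |h| ^ r) ∧
      ∀ x y h : ℝ, h ≠ 0 →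
        |frameSum φ ψ a b x| +
          |frameSum φ ψ a b (y + h) - frameSum φ ψ a b y| / |h| ^ r ≤
          C * max Ca Cb := by
  classical
  -- basic exponent facts
  have hrs : r < min s 1 := hr'
  have hrρ : r < (r + min s 1) / 2 := by
    have := lt_min hs one_pos; linarith
  set ρ : ℝ := (r + min s 1) / 2 with hρdef
  have hρ1 : ρ < 1 := by
    have h1 : min s 1 ≤ 1 := min_le_right _ _
    rw [hρdef]; linarith
  have hρ0 : 0 < ρ := lt_trans hr hrρ
  have hρs : ρ ≤ s := by
    have h1 : min s 1 ≤ s := min_le_left _ _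
    rw [hρdef]; linarith
  have hfρ : ⌊ρ⌋₊ = 0 := Nat.floor_eq_zero.mpr hρ1
  obtain ⟨C0, hC0, hφ0, hψ0⟩ := hV.2.2 0 le_rfl hs.le
  obtain ⟨C1, hC1, hφ1, hψ1⟩ := hV.2.2 ρ hρ0.le hρs
  -- geometric quantities
  set w : ℝ := (2:ℝ) ^ (-r) with hwdef
  have hw0 : 0 < w := Real.rpow_pos_of_pos two_pos _
  have hw1 : w < 1 := by
    rw [hwdef]
    exact Real.rpow_lt_one_of_one_lt_of_neg one_lt_two (neg_lt_zero.mpr hr)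
  set q : ℝ := (2:ℝ) ^ (ρ - r) with hqdef
  have hq1 : 1 < q := by
    rw [hqdef]
    exact Real.one_lt_rpow_iff_of_pos two_pos |>.mpr (Or.inl ⟨one_lt_two, sub_pos.mpr hrρ⟩)
  have hq0 : 0 < q := lt_trans one_pos hq1
  have hqq : 0 < q / (q - 1) := div_pos hq0 (by linarith)
  set Gw : ℝ := (1 - w)⁻¹ with hGwdef
  have hGw0 : 0 < Gw := by rw [hGwdef]; exact inv_pos.mpr (by linarith)
  have hGsum : ∑' n : ℕ, w ^ n = Gw := by
    rw [hGwdef]; exact tsum_geometric_of_lt_one hw0.le hw1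
  have hwsum : Summable (fun n : ℕ => w ^ n) := summable_geometric_of_lt_one hw0.le hw1
  set Ksup : ℝ := CΓ * C0 * (1 + Gw) with hKsupdef
  have hKsup0 : 0 < Ksup := by
    rw [hKsupdef]; positivity
  set Khol : ℝ := 2 * Ksup + 2 * CΓ * C1 + 2 * CΓ * C1 * (q / (q - 1)) + 4 * CΓ * C0 * Gw
    with hKholdef
  have hKhol0 : 0 < Khol := by
    rw [hKholdef]
    have h1 : 0 < 2 * CΓ * C1 := by positivity
    have h2 : 0 < 2 * CΓ * C1 * (q / (q - 1)) := by positivity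
    have h3 : 0 < 4 * CΓ * C0 * Gw := by positivity
    linarith
  refine ⟨Ksup + Khol + 1, by linarith, ?_⟩
  intro a b Ca Cb ha hb
  have hCa0 : 0 ≤ Ca := le_trans (abs_nonneg _) (ha 0)
  have hCb0 : 0 ≤ Cb := le_trans (by positivity) (hb 1 0)
  have hmax0 : 0 ≤ max Ca Cb := le_trans hCa0 (le_max_left _ _)
  have hCam : Ca ≤ max Ca Cb := le_max_left _ _
  have hCbm : Cb ≤ max Ca Cb := le_max_right _ _
  -- coefficient decay
  have hbb : ∀ (j : ℕ+) (k : ℤ), |b j k| ≤ Cb * (2:ℝ) ^ (-(((j:ℕ):ℝ) * (r + 1/2))) := by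
    intro j k
    have e : (0:ℝ) < (2:ℝ) ^ (((j:ℕ):ℝ) * (r + 1/2)) := Real.rpow_pos_of_pos two_pos _
    rw [Real.rpow_neg (by norm_num), ← div_eq_mul_inv, le_div_iff₀ e]
    linarith [hb j k, mul_comm (|b j k|) ((2:ℝ) ^ (((j:ℕ):ℝ) * (r + 1/2)))]
  -- sup bounds
  have hφsup : ∀ (k : ℤ) (x : ℝ), |φ k x| ≤ C0 := by
    intro k x
    have := (hφ0 k).1 0 (Nat.zero_le _) x
    simpa [iteratedDeriv_zero] using this
  have hψsup : ∀ (j : ℕ+) (k : ℤ) (x : ℝ),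
      |ψ j k x| ≤ C0 * (2:ℝ) ^ (((j:ℕ):ℝ) * ((0:ℝ) + 1/2)) := by
    intro j k x
    have := (hψ0 j k).1 0 (Nat.zero_le _) x
    simpa [iteratedDeriv_zero] using this
  -- product term bound
  have hterm : ∀ (j : ℕ+) (k : ℤ) (x : ℝ), |b j k * ψ j k x| ≤ Cb * C0 * w ^ (j:ℕ) := by
    intro j k x
    have key : (2:ℝ) ^ (-(((j:ℕ):ℝ) * (r + 1/2))) * (2:ℝ) ^ (((j:ℕ):ℝ) * ((0:ℝ) + 1/2))
        = w ^ (j:ℕ) := by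
      rw [← Real.rpow_add two_pos,
        show -(((j:ℕ):ℝ) * (r + 1/2)) + ((j:ℕ):ℝ) * ((0:ℝ) + 1/2) = ((j:ℕ):ℝ) * (-r) by ring,
        FR_rpow_nat_mul, ← hwdef]
    calc |b j k * ψ j k x| = |b j k| * |ψ j k x| := abs_mul _ _
      _ ≤ (Cb * (2:ℝ) ^ (-(((j:ℕ):ℝ) * (r + 1/2)))) *
          (C0 * (2:ℝ) ^ (((j:ℕ):ℝ) * ((0:ℝ) + 1/2))) :=
        mul_le_mul (hbb j k) (hψsup j k x) (abs_nonneg _) (by positivity)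
      _ = Cb * C0 * ((2:ℝ) ^ (-(((j:ℕ):ℝ) * (r + 1/2))) *
          (2:ℝ) ^ (((j:ℕ):ℝ) * ((0:ℝ) + 1/2))) := by ring
      _ = Cb * C0 * w ^ (j:ℕ) := by rw [key]
  -- support finsets
  have suppφ : ∀ x : ℝ, ∃ T : Finset ℤ, (∀ k ∉ T, φ k x = 0) ∧ ((T.card:ℝ) ≤ CΓ) := by
    intro x
    obtain ⟨hfin, hcard⟩ := (hIII x x le_rfl).1
    exact FR_supp_finset hfin (by simpa using hcard)
  have suppψ : ∀ (j : ℕ+) (x : ℝ), ∃ T : Finset ℤ, (∀ k ∉ T, ψ j k x = 0) ∧ ((T.card:ℝ) ≤ CΓ) := by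
    intro j x
    obtain ⟨hfin, hcard⟩ := (hIII x x le_rfl).2 j
    exact FR_supp_finset hfin (by simpa using hcard)
  have hfinφ : ∀ x : ℝ, {k : ℤ | φ k x ≠ 0}.Finite := by
    intro x
    obtain ⟨T, hT0, _⟩ := suppφ x
    apply Set.Finite.subset T.finite_toSet
    intro k hk
    simp only [Set.mem_setOf_eq] at hk
    by_contra hkT
    exact hk (hT0 k (by simpa using hkT))
  -- fiberwise value bound
  have hfiber : ∀ (x : ℝ) (j : ℕ+),
      Summable (fun k => |b j k * ψ j k x|) ∧
      (∑' k, |b j k * ψ j k x|) ≤ CΓ * (Cb * C0 * w ^ (j:ℕ)) := by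
    intro x j
    obtain ⟨T, hT0, hTc⟩ := suppψ j x
    have h0 : ∀ k ∉ T, b j k * ψ j k x = 0 := fun k hk => by rw [hT0 k hk, mul_zero]
    have hM : 0 ≤ Cb * C0 * w ^ (j:ℕ) :=
      mul_nonneg (mul_nonneg hCb0 hC0.le) (pow_nonneg hw0.le _)
    have := FR_tsum_fiber h0 (fun k => hterm j k x) hTc hM
    exact ⟨this.1, this.2.1⟩
  have hgeo_sum : Summable (fun j : ℕ+ => CΓ * (Cb * C0 * w ^ (j:ℕ))) := by
    apply FR_summable_pnat
    exact (hwsum.mul_left (CΓ * (Cb * C0) * w)).congr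
      (fun n => by rw [Nat.succPNat_coe, pow_succ]; ring)
  have hgeo_tsum : ∑' j : ℕ+, CΓ * (Cb * C0 * w ^ (j:ℕ)) ≤ CΓ * (Cb * C0) * Gw := by
    have e1 : ∑' j : ℕ+, CΓ * (Cb * C0 * w ^ (j:ℕ))
        = ∑' n : ℕ, (CΓ * (Cb * C0) * w) * w ^ n := by
      rw [FR_tsum_pnat]
      exact tsum_congr (fun n => by rw [Nat.succPNat_coe, pow_succ]; ring)
    rw [e1, tsum_mul_left, hGsum]
    have h1 : 0 ≤ CΓ * (Cb * C0) := mul_nonneg hCΓ.le (mul_nonneg hCb0 hC0.le)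
    nlinarith [mul_nonneg h1 hGw0.le, hw1, hw0, hGw0]
  -- ψ series summability and bound
  have hψseries : ∀ x : ℝ, (Summable fun p : ℕ+ × ℤ => |b p.1 p.2 * ψ p.1 p.2 x|) ∧
      |∑' p : ℕ+ × ℤ, b p.1 p.2 * ψ p.1 p.2 x| ≤ CΓ * (Cb * C0) * Gw := by
    intro x
    have hsumm : Summable fun p : ℕ+ × ℤ => |b p.1 p.2 * ψ p.1 p.2 x| := by
      rw [summable_prod_of_nonneg (fun p => abs_nonneg _)]
      exact ⟨fun j => (hfiber x j).1,
        Summable.of_nonneg_of_le (fun j => tsum_nonneg fun k => abs_nonneg _)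
          (fun j => (hfiber x j).2) hgeo_sum⟩
    refine ⟨hsumm, ?_⟩
    have h1 : |∑' p : ℕ+ × ℤ, b p.1 p.2 * ψ p.1 p.2 x|
        ≤ ∑' p : ℕ+ × ℤ, |b p.1 p.2 * ψ p.1 p.2 x| := by
      have := norm_tsum_le_tsum_norm (f := fun p : ℕ+ × ℤ => b p.1 p.2 * ψ p.1 p.2 x)
        (by simp only [Real.norm_eq_abs]; exact hsumm)
      simp only [Real.norm_eq_abs] at this
      exact this
    have h2 : ∑' p : ℕ+ × ℤ, |b p.1 p.2 * ψ p.1 p.2 x|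
        = ∑' (j : ℕ+), ∑' (k : ℤ), |b j k * ψ j k x| :=
      hsumm.tsum_prod' (fun j => (hfiber x j).1)
    have hsumm2 : Summable (fun j : ℕ+ => ∑' (k : ℤ), |b j k * ψ j k x|) :=
      ((summable_prod_of_nonneg (fun p => abs_nonneg _)).mp hsumm).2
    have h3 : ∑' (j : ℕ+), ∑' (k : ℤ), |b j k * ψ j k x|
        ≤ ∑' j : ℕ+, CΓ * (Cb * C0 * w ^ (j:ℕ)) :=
      Summable.tsum_le_tsum (fun j => (hfiber x j).2) hsumm2 hgeo_sum
    calc |∑' p : ℕ+ × ℤ, b p.1 p.2 * ψ p.1 p.2 x|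
        ≤ ∑' p : ℕ+ × ℤ, |b p.1 p.2 * ψ p.1 p.2 x| := h1
      _ = ∑' (j : ℕ+), ∑' (k : ℤ), |b j k * ψ j k x| := h2
      _ ≤ ∑' j : ℕ+, CΓ * (Cb * C0 * w ^ (j:ℕ)) := h3
      _ ≤ CΓ * (Cb * C0) * Gw := hgeo_tsum
  -- φ series
  have hφsum : ∀ x : ℝ, Summable (fun k => a k * φ k x) ∧
      |∑' k, a k * φ k x| ≤ CΓ * (Ca * C0) := by
    intro x
    obtain ⟨T, hT0, hTc⟩ := suppφ x
    have h0 : ∀ k ∉ T, a k * φ k x = 0 := fun k hk => by rw [hT0 k hk, mul_zero]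
    have hbnd : ∀ k, |a k * φ k x| ≤ Ca * C0 := fun k => by
      rw [abs_mul]; exact mul_le_mul (ha k) (hφsup k x) (abs_nonneg _) hCa0
    have := FR_tsum_fiber h0 hbnd hTc (mul_nonneg hCa0 hC0.le)
    exact ⟨this.1.of_abs, this.2.2⟩
  -- boundedness
  have hfsup : ∀ x : ℝ, |frameSum φ ψ a b x| ≤ Ksup * max Ca Cb := by
    intro x
    have h1 := (hφsum x).2
    have h2 := (hψseries x).2
    have h3 : |frameSum φ ψ a b x| ≤ CΓ * (Ca * C0) + CΓ * (Cb * C0) * Gw := by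
      calc |frameSum φ ψ a b x|
          = |(∑' k, a k * φ k x) + ∑' p : ℕ+ × ℤ, b p.1 p.2 * ψ p.1 p.2 x| := rfl
        _ ≤ |∑' k, a k * φ k x| + |∑' p : ℕ+ × ℤ, b p.1 p.2 * ψ p.1 p.2 x| := abs_add_le _ _
        _ ≤ CΓ * (Ca * C0) + CΓ * (Cb * C0) * Gw := add_le_add h1 h2
    have h4 : 0 ≤ CΓ * C0 := mul_nonneg hCΓ.le hC0.le
    have h5 : 0 ≤ CΓ * C0 * Gw := mul_nonneg h4 hGw0.le
    have h6 := mul_nonneg (sub_nonneg.mpr hCam) h4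
    have h7 := mul_nonneg (sub_nonneg.mpr hCbm) h5
    rw [hKsupdef]
    linarith [h3, h6, h7]
  -- Hölder estimate
  have hdiff : ∀ x h : ℝ, h ≠ 0 →
      |frameSum φ ψ a b (x + h) - frameSum φ ψ a b x| ≤ Khol * max Ca Cb * |h| ^ r := by
    intro x h hne
    have hh0 : 0 < |h| := abs_pos.mpr hne
    have hhr0 : 0 ≤ |h| ^ r := Real.rpow_nonneg (abs_nonneg _) _
    have h2Ksup : 2 * Ksup ≤ Khol := by
      rw [hKholdef]
      have h1 : 0 < 2 * CΓ * C1 := by positivity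
      have h2 : 0 < 2 * CΓ * C1 * (q / (q - 1)) := by positivity
      have h3 : 0 < 4 * CΓ * C0 * Gw := by positivity
      linarith
    rcases le_or_gt 1 |h| with hbig | hsmall
    · -- large increments
      have h1 : (1:ℝ) ≤ |h| ^ r := Real.one_le_rpow hbig hr.le
      have h2 : |frameSum φ ψ a b (x + h) - frameSum φ ψ a b x| ≤ 2 * (Ksup * max Ca Cb) := by
        calc |frameSum φ ψ a b (x + h) - frameSum φ ψ a b x|
            ≤ |frameSum φ ψ a b (x + h)| + |frameSum φ ψ a b x| := abs_sub _ _
          _ ≤ 2 * (Ksup * max Ca Cb) := by linarith [hfsup (x+h), hfsup x]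
      have h3 : 0 ≤ Ksup * max Ca Cb := mul_nonneg hKsup0.le hmax0
      calc |frameSum φ ψ a b (x + h) - frameSum φ ψ a b x|
          ≤ 2 * (Ksup * max Ca Cb) := h2
        _ ≤ 2 * (Ksup * max Ca Cb) * |h| ^ r := le_mul_of_one_le_right (by linarith) h1
        _ ≤ Khol * max Ca Cb * |h| ^ r := by
            have := mul_le_mul_of_nonneg_right
              (mul_le_mul_of_nonneg_right h2Ksup hmax0) hhr0
            linarith [this]
    · -- small increments
      have hne2 : x + h ≠ x := by intro he; exact hne (by linarith)
      set J : ℕ := ⌊Real.logb 2 |h|⁻¹⌋₊ with hJdef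
      have hinv1 : 1 < |h|⁻¹ := one_lt_inv_iff₀.mpr ⟨hh0, hsmall⟩
      have hlog0 : 0 ≤ Real.logb 2 |h|⁻¹ := Real.logb_nonneg one_lt_two hinv1.le
      have hJ1 : (2:ℝ) ^ ((J:ℝ)) ≤ |h|⁻¹ := by
        calc (2:ℝ) ^ ((J:ℝ)) ≤ (2:ℝ) ^ (Real.logb 2 |h|⁻¹) :=
              Real.rpow_le_rpow_of_exponent_le one_le_two (Nat.floor_le hlog0)
          _ = |h|⁻¹ := Real.rpow_logb two_pos (by norm_num) (inv_pos.mpr hh0)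
      have hJ2 : (2:ℝ) ^ (-((J:ℝ) + 1)) ≤ |h| := by
        have h2 : |h|⁻¹ < (2:ℝ) ^ ((J:ℝ) + 1) := by
          calc |h|⁻¹ = (2:ℝ) ^ (Real.logb 2 |h|⁻¹) :=
                (Real.rpow_logb two_pos (by norm_num) (inv_pos.mpr hh0)).symm
            _ < (2:ℝ) ^ ((J:ℝ) + 1) :=
                Real.rpow_lt_rpow_of_exponent_lt one_lt_two (Nat.lt_floor_add_one _)
        have e : (0:ℝ) < (2:ℝ) ^ ((J:ℝ) + 1) := Real.rpow_pos_of_pos two_pos _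
        rw [Real.rpow_neg (by norm_num)]
        rw [inv_le_comm₀ e hh0]
        exact h2.le
      have hkeyA : q ^ J * |h| ^ ρ ≤ |h| ^ r := by
        have e1 : q ^ J = ((2:ℝ) ^ ((J:ℝ))) ^ (ρ - r) := by
          rw [hqdef, ← FR_rpow_nat_mul, ← Real.rpow_mul (by norm_num)]
        have h1 : q ^ J ≤ (|h|⁻¹) ^ (ρ - r) := by
          rw [e1]
          exact Real.rpow_le_rpow (Real.rpow_nonneg (by norm_num) _) hJ1 (by linarith)
        have h2 : (|h|⁻¹) ^ (ρ - r) * |h| ^ ρ = |h| ^ r := by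
          rw [Real.inv_rpow (abs_nonneg h), ← Real.rpow_neg (abs_nonneg h),
            ← Real.rpow_add hh0, show -(ρ - r) + ρ = r by ring]
        calc q ^ J * |h| ^ ρ ≤ (|h|⁻¹) ^ (ρ - r) * |h| ^ ρ :=
              mul_le_mul_of_nonneg_right h1 (Real.rpow_nonneg (abs_nonneg _) _)
          _ = |h| ^ r := h2
      have hkeyB : w ^ (J + 1) ≤ |h| ^ r := by
        have e1 : w ^ (J + 1) = ((2:ℝ) ^ (-((J:ℝ) + 1))) ^ r := by
          rw [hwdef, ← FR_rpow_nat_mul (-r) (J+1), ← Real.rpow_mul (by norm_num)]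
          push_cast
          congr 1
          ring
        rw [e1]
        exact Real.rpow_le_rpow (Real.rpow_pos_of_pos two_pos _).le hJ2 hr.le
      -- φ part
      have hφdiff : |(∑' k, a k * φ k (x + h)) - ∑' k, a k * φ k x|
          ≤ (2 * CΓ) * (Ca * (C1 * |h| ^ ρ)) := by
        obtain ⟨T1, hT1, hT1c⟩ := suppφ (x + h)
        obtain ⟨T2, hT2, hT2c⟩ := suppφ x
        have hsub : (∑' k, a k * φ k (x + h)) - ∑' k, a k * φ k x
            = ∑' k, (a k * φ k (x + h) - a k * φ k x) :=
          (Summable.tsum_sub (hφsum (x + h)).1 (hφsum x).1).symm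
        rw [hsub]
        have h0 : ∀ k ∉ T1 ∪ T2, a k * φ k (x + h) - a k * φ k x = 0 := by
          intro k hk
          rw [hT1 k (fun hh => hk (Finset.mem_union_left _ hh)),
            hT2 k (fun hh => hk (Finset.mem_union_right _ hh))]
          ring
        have hbnd : ∀ k, |a k * φ k (x + h) - a k * φ k x| ≤ Ca * (C1 * |h| ^ ρ) := by
          intro k
          have hφh := (hφ1 k).2 (x + h) x hne2
          rw [hfρ] at hφh
          simp only [iteratedDeriv_zero, Nat.cast_zero, sub_zero, add_sub_cancel_left] at hφh
          calc |a k * φ k (x + h) - a k * φ k x|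
              = |a k| * |φ k (x + h) - φ k x| := by rw [← abs_mul, mul_sub]
            _ ≤ Ca * (C1 * |h| ^ ρ) := mul_le_mul (ha k) hφh (abs_nonneg _) hCa0
        have hTc : (((T1 ∪ T2).card : ℕ) : ℝ) ≤ 2 * CΓ := by
          have hcu := Finset.card_union_le T1 T2
          calc (((T1 ∪ T2).card : ℕ) : ℝ) ≤ ((T1.card : ℝ) + T2.card) := by exact_mod_cast hcu
            _ ≤ 2 * CΓ := by linarith
        have hM : 0 ≤ Ca * (C1 * |h| ^ ρ) :=
          mul_nonneg hCa0 (mul_nonneg hC1.le (Real.rpow_nonneg (abs_nonneg _) _))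
        exact (FR_tsum_fiber h0 hbnd hTc hM).2.2
      -- ψ fibers, difference
      have hfiberdiff : ∀ j : ℕ+,
          Summable (fun k => |b j k * (ψ j k (x + h) - ψ j k x)|) ∧
          (∑' k, |b j k * (ψ j k (x + h) - ψ j k x)|)
            ≤ (2 * CΓ) * (Cb * C1 * (q ^ (j:ℕ) * |h| ^ ρ)) ∧
          (∑' k, |b j k * (ψ j k (x + h) - ψ j k x)|)
            ≤ (2 * CΓ) * (2 * (Cb * C0) * w ^ (j:ℕ)) := by
        intro j
        obtain ⟨T1, hT1, hT1c⟩ := suppψ j (x + h)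
        obtain ⟨T2, hT2, hT2c⟩ := suppψ j x
        have h0 : ∀ k ∉ T1 ∪ T2, b j k * (ψ j k (x + h) - ψ j k x) = 0 := by
          intro k hk
          rw [hT1 k (fun hh => hk (Finset.mem_union_left _ hh)),
            hT2 k (fun hh => hk (Finset.mem_union_right _ hh))]
          ring
        have hTc : (((T1 ∪ T2).card : ℕ) : ℝ) ≤ 2 * CΓ := by
          have hcu := Finset.card_union_le T1 T2
          calc (((T1 ∪ T2).card : ℕ) : ℝ) ≤ ((T1.card : ℝ) + T2.card) := by exact_mod_cast hcu
            _ ≤ 2 * CΓ := by linarith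
        have hbndA : ∀ k, |b j k * (ψ j k (x + h) - ψ j k x)|
            ≤ Cb * C1 * (q ^ (j:ℕ) * |h| ^ ρ) := by
          intro k
          have hψh := (hψ1 j k).2 (x + h) x hne2
          rw [hfρ] at hψh
          simp only [iteratedDeriv_zero, Nat.cast_zero, sub_zero, add_sub_cancel_left] at hψh
          have key : (2:ℝ) ^ (-(((j:ℕ):ℝ) * (r + 1/2))) * (2:ℝ) ^ (((j:ℕ):ℝ) * (ρ + 1/2))
              = q ^ (j:ℕ) := by
            rw [← Real.rpow_add two_pos,
              show -(((j:ℕ):ℝ) * (r + 1/2)) + ((j:ℕ):ℝ) * (ρ + 1/2) = ((j:ℕ):ℝ) * (ρ - r)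
                by ring,
              FR_rpow_nat_mul, ← hqdef]
          calc |b j k * (ψ j k (x + h) - ψ j k x)|
              = |b j k| * |ψ j k (x + h) - ψ j k x| := abs_mul _ _
            _ ≤ (Cb * (2:ℝ) ^ (-(((j:ℕ):ℝ) * (r + 1/2)))) *
                (C1 * (2:ℝ) ^ (((j:ℕ):ℝ) * (ρ + 1/2)) * |h| ^ ρ) :=
              mul_le_mul (hbb j k) hψh (abs_nonneg _)
                (mul_nonneg hCb0 (Real.rpow_pos_of_pos two_pos _).le)
            _ = Cb * C1 * (((2:ℝ) ^ (-(((j:ℕ):ℝ) * (r + 1/2))) *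
                (2:ℝ) ^ (((j:ℕ):ℝ) * (ρ + 1/2))) * |h| ^ ρ) := by ring
            _ = Cb * C1 * (q ^ (j:ℕ) * |h| ^ ρ) := by rw [key]
        have hbndB : ∀ k, |b j k * (ψ j k (x + h) - ψ j k x)|
            ≤ 2 * (Cb * C0) * w ^ (j:ℕ) := by
          intro k
          calc |b j k * (ψ j k (x + h) - ψ j k x)|
              = |b j k * ψ j k (x + h) - b j k * ψ j k x| := by rw [mul_sub]
            _ ≤ |b j k * ψ j k (x + h)| + |b j k * ψ j k x| := abs_sub _ _
            _ ≤ 2 * (Cb * C0) * w ^ (j:ℕ) := by linarith [hterm j k (x + h), hterm j k x]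
        have hMA : 0 ≤ Cb * C1 * (q ^ (j:ℕ) * |h| ^ ρ) :=
          mul_nonneg (mul_nonneg hCb0 hC1.le)
            (mul_nonneg (pow_nonneg hq0.le _) (Real.rpow_nonneg (abs_nonneg _) _))
        have hMB : 0 ≤ 2 * (Cb * C0) * w ^ (j:ℕ) :=
          mul_nonneg (mul_nonneg (by norm_num) (mul_nonneg hCb0 hC0.le)) (pow_nonneg hw0.le _)
        obtain ⟨hs1, hl1, -⟩ := FR_tsum_fiber h0 hbndA hTc hMA
        obtain ⟨-, hl2, -⟩ := FR_tsum_fiber h0 hbndB hTc hMB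
        exact ⟨hs1, hl1, hl2⟩
      have hF2sum : Summable (fun p : ℕ+ × ℤ => |b p.1 p.2 * (ψ p.1 p.2 (x + h) - ψ p.1 p.2 x)|) := by
        rw [summable_prod_of_nonneg (fun p => abs_nonneg _)]
        refine ⟨fun j => (hfiberdiff j).1, ?_⟩
        apply Summable.of_nonneg_of_le (fun j => tsum_nonneg fun k => abs_nonneg _)
          (fun j => (hfiberdiff j).2.2)
        apply FR_summable_pnat
        exact (hwsum.mul_left ((2 * CΓ) * (2 * (Cb * C0)) * w)).congr
          (fun n => by rw [Nat.succPNat_coe, pow_succ]; ring)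
      have hGsummable : Summable (fun n : ℕ =>
          ∑' (k : ℤ), |b n.succPNat k * (ψ n.succPNat k (x + h) - ψ n.succPNat k x)|) := by
        refine Summable.of_nonneg_of_le (f := fun n : ℕ => (2 * CΓ) * (2 * (Cb * C0)) * w * w ^ n)
          (fun n => tsum_nonneg fun k => abs_nonneg _) ?_ (hwsum.mul_left _)
        intro n
        have := (hfiberdiff n.succPNat).2.2
        rw [Nat.succPNat_coe, pow_succ] at this
        calc ∑' (k : ℤ), |b n.succPNat k * (ψ n.succPNat k (x + h) - ψ n.succPNat k x)|
            ≤ (2 * CΓ) * (2 * (Cb * C0) * (w ^ n * w)) := this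
          _ = (2 * CΓ) * (2 * (Cb * C0)) * w * w ^ n := by ring
      have heq1 : ∑' p : ℕ+ × ℤ, |b p.1 p.2 * (ψ p.1 p.2 (x + h) - ψ p.1 p.2 x)|
          = ∑' (j : ℕ+), ∑' (k : ℤ), |b j k * (ψ j k (x + h) - ψ j k x)| :=
        hF2sum.tsum_prod' (fun j => (hfiberdiff j).1)
      have heq2 : ∑' (j : ℕ+), ∑' (k : ℤ), |b j k * (ψ j k (x + h) - ψ j k x)|
          = ∑' n : ℕ, ∑' (k : ℤ), |b n.succPNat k * (ψ n.succPNat k (x + h) - ψ n.succPNat k x)| :=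
        FR_tsum_pnat _
      have hsplit : ∑' n : ℕ, ∑' (k : ℤ),
            |b n.succPNat k * (ψ n.succPNat k (x + h) - ψ n.succPNat k x)|
          = (∑ n ∈ Finset.range J, ∑' (k : ℤ),
              |b n.succPNat k * (ψ n.succPNat k (x + h) - ψ n.succPNat k x)|)
            + ∑' n : ℕ, ∑' (k : ℤ),
              |b (n + J).succPNat k * (ψ (n + J).succPNat k (x + h) - ψ (n + J).succPNat k x)| :=
        (Summable.sum_add_tsum_nat_add J hGsummable).symm
      -- Part A
      have hA : (∑ n ∈ Finset.range J, ∑' (k : ℤ),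
            |b n.succPNat k * (ψ n.succPNat k (x + h) - ψ n.succPNat k x)|)
          ≤ 2 * CΓ * (Cb * C1) * (q / (q - 1)) * |h| ^ r := by
        have hcoef : 0 ≤ 2 * CΓ * (Cb * C1) * |h| ^ ρ :=
          mul_nonneg (mul_nonneg (by positivity) (mul_nonneg hCb0 hC1.le))
            (Real.rpow_nonneg (abs_nonneg _) _)
        have h1 : (∑ n ∈ Finset.range J, ∑' (k : ℤ),
              |b n.succPNat k * (ψ n.succPNat k (x + h) - ψ n.succPNat k x)|)
            ≤ ∑ n ∈ Finset.range J, (2 * CΓ * (Cb * C1) * |h| ^ ρ) * q ^ (n + 1) := by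
          apply Finset.sum_le_sum
          intro n _
          have := (hfiberdiff n.succPNat).2.1
          rw [Nat.succPNat_coe] at this
          calc ∑' (k : ℤ), |b n.succPNat k * (ψ n.succPNat k (x + h) - ψ n.succPNat k x)|
              ≤ (2 * CΓ) * (Cb * C1 * (q ^ (n + 1) * |h| ^ ρ)) := this
            _ = (2 * CΓ * (Cb * C1) * |h| ^ ρ) * q ^ (n + 1) := by ring
        have h2 : ∑ n ∈ Finset.range J, (2 * CΓ * (Cb * C1) * |h| ^ ρ) * q ^ (n + 1)
            = (2 * CΓ * (Cb * C1) * |h| ^ ρ) * ((∑ n ∈ Finset.range J, q ^ n) * q) := by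
          rw [← Finset.mul_sum, Finset.sum_mul]
          all_goals simp [pow_succ]
        have h3 : (∑ n ∈ Finset.range J, q ^ n) * q ≤ (q ^ J / (q - 1)) * q := by
          have := geom_sum_eq (ne_of_gt hq1) J
          rw [this]
          have hd : 0 < q - 1 := by linarith
          apply mul_le_mul_of_nonneg_right _ hq0.le
          gcongr
          linarith
        calc (∑ n ∈ Finset.range J, ∑' (k : ℤ),
              |b n.succPNat k * (ψ n.succPNat k (x + h) - ψ n.succPNat k x)|)
            ≤ ∑ n ∈ Finset.range J, (2 * CΓ * (Cb * C1) * |h| ^ ρ) * q ^ (n + 1) := h1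
          _ = (2 * CΓ * (Cb * C1) * |h| ^ ρ) * ((∑ n ∈ Finset.range J, q ^ n) * q) := h2
          _ ≤ (2 * CΓ * (Cb * C1) * |h| ^ ρ) * ((q ^ J / (q - 1)) * q) :=
            mul_le_mul_of_nonneg_left h3 hcoef
          _ = 2 * CΓ * (Cb * C1) * (q / (q - 1)) * (q ^ J * |h| ^ ρ) := by ring
          _ ≤ 2 * CΓ * (Cb * C1) * (q / (q - 1)) * |h| ^ r := by
            apply mul_le_mul_of_nonneg_left hkeyA
            exact mul_nonneg (mul_nonneg (by positivity) (mul_nonneg hCb0 hC1.le)) hqq.le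
      -- Part B
      have hB : (∑' n : ℕ, ∑' (k : ℤ),
            |b (n + J).succPNat k * (ψ (n + J).succPNat k (x + h) - ψ (n + J).succPNat k x)|)
          ≤ 4 * CΓ * (Cb * C0) * Gw * |h| ^ r := by
        have hBsum : Summable (fun n : ℕ => ∑' (k : ℤ),
            |b (n + J).succPNat k * (ψ (n + J).succPNat k (x + h) - ψ (n + J).succPNat k x)|) :=
          (summable_nat_add_iff J).mpr hGsummable
        have h1 : (∑' n : ℕ, ∑' (k : ℤ),
              |b (n + J).succPNat k * (ψ (n + J).succPNat k (x + h) - ψ (n + J).succPNat k x)|)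
            ≤ ∑' n : ℕ, ((2 * CΓ) * (2 * (Cb * C0)) * w ^ (J + 1)) * w ^ n := by
          apply Summable.tsum_le_tsum _ hBsum (hwsum.mul_left _)
          intro n
          have := (hfiberdiff (n + J).succPNat).2.2
          rw [Nat.succPNat_coe] at this
          calc ∑' (k : ℤ),
              |b (n + J).succPNat k * (ψ (n + J).succPNat k (x + h) - ψ (n + J).succPNat k x)|
              ≤ (2 * CΓ) * (2 * (Cb * C0) * w ^ (n + J + 1)) := this
            _ = ((2 * CΓ) * (2 * (Cb * C0)) * w ^ (J + 1)) * w ^ n := by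
                rw [show n + J + 1 = (J + 1) + n by ring, pow_add]; ring
        have h2 : ∑' n : ℕ, ((2 * CΓ) * (2 * (Cb * C0)) * w ^ (J + 1)) * w ^ n
            = (2 * CΓ) * (2 * (Cb * C0)) * w ^ (J + 1) * Gw := by
          rw [tsum_mul_left, hGsum]
        have h3 : 0 ≤ 4 * CΓ * (Cb * C0) * Gw :=
          mul_nonneg (mul_nonneg (by positivity) (mul_nonneg hCb0 hC0.le)) hGw0.le
        have h4 := mul_le_mul_of_nonneg_left hkeyB h3
        calc (∑' n : ℕ, ∑' (k : ℤ),
              |b (n + J).succPNat k * (ψ (n + J).succPNat k (x + h) - ψ (n + J).succPNat k x)|)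
            ≤ (2 * CΓ) * (2 * (Cb * C0)) * w ^ (J + 1) * Gw := by rw [h2] at h1; exact h1
          _ ≤ 4 * CΓ * (Cb * C0) * Gw * |h| ^ r := by linarith [h4]
      -- ψ part total
      have hψdiff : |(∑' p : ℕ+ × ℤ, b p.1 p.2 * ψ p.1 p.2 (x + h))
            - ∑' p : ℕ+ × ℤ, b p.1 p.2 * ψ p.1 p.2 x|
          ≤ (2 * CΓ * (Cb * C1) * (q / (q - 1)) + 4 * CΓ * (Cb * C0) * Gw) * |h| ^ r := by
        have hsub : (∑' p : ℕ+ × ℤ, b p.1 p.2 * ψ p.1 p.2 (x + h))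
              - ∑' p : ℕ+ × ℤ, b p.1 p.2 * ψ p.1 p.2 x
            = ∑' p : ℕ+ × ℤ, b p.1 p.2 * (ψ p.1 p.2 (x + h) - ψ p.1 p.2 x) := by
          rw [← Summable.tsum_sub ((hψseries (x + h)).1.of_abs) ((hψseries x).1.of_abs)]
          exact tsum_congr (fun p => by ring)
        rw [hsub]
        have habs : |∑' p : ℕ+ × ℤ, b p.1 p.2 * (ψ p.1 p.2 (x + h) - ψ p.1 p.2 x)|
            ≤ ∑' p : ℕ+ × ℤ, |b p.1 p.2 * (ψ p.1 p.2 (x + h) - ψ p.1 p.2 x)| := by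
          have := norm_tsum_le_tsum_norm
            (f := fun p : ℕ+ × ℤ => b p.1 p.2 * (ψ p.1 p.2 (x + h) - ψ p.1 p.2 x))
            (by simp only [Real.norm_eq_abs]; exact hF2sum)
          simp only [Real.norm_eq_abs] at this
          exact this
        calc |∑' p : ℕ+ × ℤ, b p.1 p.2 * (ψ p.1 p.2 (x + h) - ψ p.1 p.2 x)|
            ≤ ∑' p : ℕ+ × ℤ, |b p.1 p.2 * (ψ p.1 p.2 (x + h) - ψ p.1 p.2 x)| := habs
          _ = ∑' n : ℕ, ∑' (k : ℤ),
              |b n.succPNat k * (ψ n.succPNat k (x + h) - ψ n.succPNat k x)| := by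
            rw [heq1, heq2]
          _ ≤ (2 * CΓ * (Cb * C1) * (q / (q - 1)) + 4 * CΓ * (Cb * C0) * Gw) * |h| ^ r := by
            rw [hsplit]
            have := add_le_add hA hB
            linarith [this]
      -- assemble
      have hρr : |h| ^ ρ ≤ |h| ^ r :=
        Real.rpow_le_rpow_of_exponent_ge hh0 hsmall.le hrρ.le
      have hdeco : frameSum φ ψ a b (x + h) - frameSum φ ψ a b x
          = ((∑' k, a k * φ k (x + h)) - ∑' k, a k * φ k x)
            + ((∑' p : ℕ+ × ℤ, b p.1 p.2 * ψ p.1 p.2 (x + h))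
              - ∑' p : ℕ+ × ℤ, b p.1 p.2 * ψ p.1 p.2 x) := by
        show ((∑' k, a k * φ k (x+h)) + ∑' p : ℕ+ × ℤ, b p.1 p.2 * ψ p.1 p.2 (x+h))
            - ((∑' k, a k * φ k x) + ∑' p : ℕ+ × ℤ, b p.1 p.2 * ψ p.1 p.2 x) = _
        ring
      have htot : |frameSum φ ψ a b (x + h) - frameSum φ ψ a b x|
          ≤ (2 * CΓ) * (Ca * (C1 * |h| ^ ρ))
            + (2 * CΓ * (Cb * C1) * (q / (q - 1)) + 4 * CΓ * (Cb * C0) * Gw) * |h| ^ r := by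
        rw [hdeco]
        calc |((∑' k, a k * φ k (x + h)) - ∑' k, a k * φ k x)
              + ((∑' p : ℕ+ × ℤ, b p.1 p.2 * ψ p.1 p.2 (x + h))
                - ∑' p : ℕ+ × ℤ, b p.1 p.2 * ψ p.1 p.2 x)|
            ≤ |(∑' k, a k * φ k (x + h)) - ∑' k, a k * φ k x|
              + |(∑' p : ℕ+ × ℤ, b p.1 p.2 * ψ p.1 p.2 (x + h))
                - ∑' p : ℕ+ × ℤ, b p.1 p.2 * ψ p.1 p.2 x| := abs_add_le _ _
          _ ≤ _ := add_le_add hφdiff hψdiff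
      -- final comparison with Khol * max * |h|^r
      have step1 : (2 * CΓ) * (Ca * (C1 * |h| ^ ρ)) ≤ 2 * CΓ * C1 * max Ca Cb * |h| ^ r := by
        have hmm : Ca * |h| ^ ρ ≤ max Ca Cb * |h| ^ r :=
          mul_le_mul hCam hρr (Real.rpow_nonneg (abs_nonneg _) _) hmax0
        have := mul_le_mul_of_nonneg_left hmm (by positivity : (0:ℝ) ≤ 2 * CΓ * C1)
        linarith [this]
      have step2 : 2 * CΓ * (Cb * C1) * (q / (q - 1)) * |h| ^ r
          ≤ 2 * CΓ * C1 * (q / (q - 1)) * max Ca Cb * |h| ^ r := by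
        have hc : 0 ≤ 2 * CΓ * C1 * (q / (q - 1)) * |h| ^ r :=
          mul_nonneg (mul_nonneg (by positivity) hqq.le) hhr0
        have := mul_le_mul_of_nonneg_left hCbm hc
        linarith [this]
      have step3 : 4 * CΓ * (Cb * C0) * Gw * |h| ^ r
          ≤ 4 * CΓ * C0 * Gw * max Ca Cb * |h| ^ r := by
        have hc : 0 ≤ 4 * CΓ * C0 * Gw * |h| ^ r :=
          mul_nonneg (mul_nonneg (by positivity) hGw0.le) hhr0
        have := mul_le_mul_of_nonneg_left hCbm hc
        linarith [this]
      have hrest : 0 ≤ 2 * Ksup * max Ca Cb * |h| ^ r :=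
        mul_nonneg (mul_nonneg (by positivity) hmax0) hhr0
      rw [hKholdef]
      linarith [htot, step1, step2, step3, hrest]
  -- conclusion
  refine ⟨hfinφ, fun x => (hψseries x).1, ⟨Ksup * max Ca Cb, hfsup⟩,
    ⟨Khol * max Ca Cb, hdiff⟩, ?_⟩
  intro x y h hne
  have h1 := hfsup x
  have h2 := hdiff y h hne
  have hpos : 0 < |h| ^ r := Real.rpow_pos_of_pos (abs_pos.mpr hne) r
  have h3 : |frameSum φ ψ a b (y + h) - frameSum φ ψ a b y| / |h| ^ r
      ≤ Khol * max Ca Cb := by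
    rw [div_le_iff₀ hpos]; exact h2
  have h4 : Ksup * max Ca Cb + Khol * max Ca Cb ≤ (Ksup + Khol + 1) * max Ca Cb := by
    linarith [hmax0]
  linarith

end FrameReg
end
end

section
/- Assume ℱ ⊂ C⁰(ℝ) satisfies assumptions (I), (II) and (IV) with 1 vanishing moment, and that sup_k ‖φ_k‖_∞ < ∞. Let r ∈ (0,1). Then for every f ∈ B^r_{∞,∞}(ℝ) ∩ L²(ℝ), the canonical frame coefficients a_k = ⟨f,φ_k⟩ and b_{j,k} = ⟨f,ψ_{j,k}⟩ satisfy: |a_k| ≤ C_φ ‖f‖_∞ for all k ∈ ℤ, where C_φ > 0 depends only on C_supp and sup_k‖φ_k‖_∞, and |b_{j,k}| ≤ C_{vm,r} · |f|_{C^r} · 2^{−j(r+1/2)} for all j ∈ ℕ, k ∈ ℤ, where |f|_{C^r} = sup_{x,h≠0}|f(x+h)−f(x)|/|h|^r. Consequently (a,b) ∈ ℓ^r_{∞,∞} and f = Σ_k a_k φ_k + Σ_{j,k} b_{j,k} ψ_{j,k} is a representation of f with coefficients in ℓ^r_{∞,∞}. -/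
open MeasureTheory Filter ENNReal

noncomputable section

namespace FrameReg

/-- Proposition 2.3: under (I), (II), (IV) with one vanishing
moment and uniformly bounded `φ_k`, the canonical frame coefficients of any
`f ∈ B^r_{∞,∞}(ℝ) ∩ L²(ℝ)`, `r ∈ (0,1)`, lie in `ℓ^r_{∞,∞}`, with the stated
quantitative bounds. -/
theorem statement_3
    (φ : ℤ → ℝ → ℝ) (ψ : ℕ+ → ℤ → ℝ → ℝ)
    (hφcont : ∀ k, Continuous (φ k))
    (hψcont : ∀ j k, Continuous (ψ j k))
    (hcs : CompactlySupported φ ψ)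
    (hφmem : ∀ k, MemLp (φ k) 2 (volume : Measure ℝ))
    (hψmem : ∀ j k, MemLp (ψ j k) 2 (volume : Measure ℝ))
    (Csupp : ℝ) (hCsupp : 0 < Csupp)
    (Cφsup : ℝ) (hCφsup : ∀ (k : ℤ) (x : ℝ), |φ k x| ≤ Cφsup)
    (xc : ℕ+ → ℤ → ℝ)
    (hI : AssumpI φ ψ hφmem hψmem)
    (hII : AssumpII Csupp φ ψ)
    (hIV1 : VanishingMoments 1 ψ)
    (hIV2 : Localization 1 ψ xc)
    (r : ℝ) (hr0 : 0 < r) (hr1 : r < 1)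
    (Cvm : ℝ) (hCvm : 0 < Cvm)
    (hloc : ∀ (j : ℕ+) (k : ℤ),
      ∫ x : ℝ, |x| ^ r * |ψ j k (x + xc j k)| ≤
        Cvm * (2:ℝ) ^ (-((j:ℕ):ℝ) * (r + 1/2))) :
    ∃ Cφ > (0:ℝ), ∀ (f : ℝ → ℝ) (hf : MemLp f 2 (volume : Measure ℝ)) (Mf Hf : ℝ),
      (∀ x, |f x| ≤ Mf) →
      (∀ x h : ℝ, h ≠ 0 → |f (x + h) - f x| ≤ Hf * |h| ^ r) →
      (∀ k : ℤ, |∫ x : ℝ, f x * φ k x| ≤ Cφ * Mf) ∧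
      (∀ (j : ℕ+) (k : ℤ),
        |∫ x : ℝ, f x * ψ j k x| ≤ Cvm * Hf * (2:ℝ) ^ (-((j:ℕ):ℝ) * (r + 1/2))) ∧
      SeqNormFin r (fun k => ∫ x : ℝ, f x * φ k x)
        (fun j k => ∫ x : ℝ, f x * ψ j k x) ∧
      HasSum (fun i : ℤ ⊕ ℕ+ × ℤ =>
        Sum.elim
          (fun k => (∫ x : ℝ, f x * φ k x) • (hφmem k).toLp (φ k))
          (fun p => (∫ x : ℝ, f x * ψ p.1 p.2 x) • (hψmem p.1 p.2).toLp (ψ p.1 p.2)) i)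
        (hf.toLp f) := by
  obtain ⟨hφcs, hψcs⟩ := hcs
  have hCφsup0 : 0 ≤ Cφsup := le_trans (abs_nonneg _) (hCφsup 0 0)
  refine ⟨Csupp * Cφsup + 1, by positivity, ?_⟩
  intro f hf Mf Hf hMf hHf
  have hMf0 : 0 ≤ Mf := le_trans (abs_nonneg _) (hMf 0)
  have hHf0 : 0 ≤ Hf := by
    have h1 := hHf 0 1 one_ne_zero
    have h2 : |(1:ℝ)| ^ r = 1 := by
      rw [abs_one, Real.one_rpow]
    rw [h2, mul_one] at h1
    exact le_trans (abs_nonneg _) h1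
  -- φ bound
  have hφb : ∀ k : ℤ, |∫ x : ℝ, f x * φ k x| ≤ (Csupp * Cφsup) * Mf := by
    intro k
    set s := Function.support (φ k) with hs
    have hsm : MeasurableSet s := ((hφcont k).isOpen_support).measurableSet
    have hslt : volume s < ∞ := lt_of_le_of_lt (hII.1 k) ENNReal.ofReal_lt_top
    have heq : ∫ x in s, f x * φ k x = ∫ x : ℝ, f x * φ k x := by
      apply setIntegral_eq_integral_of_forall_compl_eq_zero
      intro x hx
      have : φ k x = 0 := Function.notMem_support.mp hx
      rw [this, mul_zero]
    rw [← heq]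
    have hb : ∀ᵐ x ∂(volume : Measure ℝ), x ∈ s → ‖f x * φ k x‖ ≤ Mf * Cφsup := by
      filter_upwards with x _
      rw [norm_mul, Real.norm_eq_abs, Real.norm_eq_abs]
      exact mul_le_mul (hMf x) (hCφsup k x) (abs_nonneg _) hMf0
    have := norm_setIntegral_le_of_norm_le_const_ae' hslt hb
    rw [Real.norm_eq_abs] at this
    refine this.trans ?_
    have htr : (volume s).toReal ≤ Csupp :=
      ENNReal.toReal_le_of_le_ofReal hCsupp.le (hII.1 k)
    calc Mf * Cφsup * (volume s).toReal ≤ Mf * Cφsup * Csupp := by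
          exact mul_le_mul_of_nonneg_left htr (by positivity)
      _ = Csupp * Cφsup * Mf := by ring
  -- ψ bound
  have hψb : ∀ (j : ℕ+) (k : ℤ),
      |∫ x : ℝ, f x * ψ j k x| ≤ Cvm * Hf * (2:ℝ) ^ (-((j:ℕ):ℝ) * (r + 1/2)) := by
    intro j k
    set c := xc j k with hc
    have intψ : Integrable (ψ j k) := ((hψcont j k)).integrable_of_hasCompactSupport (hψcs j k)
    have intfψ : Integrable (fun x => f x * ψ j k x) :=
      intψ.bdd_mul (c := Mf) hf.aestronglyMeasurable (Eventually.of_forall fun x => by rw [Real.norm_eq_abs]; exact hMf x)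
    have intcψ : Integrable (fun x => f c * ψ j k x) := intψ.const_mul _
    have hzero : ∫ x : ℝ, ψ j k x = 0 := by
      have := hIV1 0 zero_lt_one j k
      simpa using this
    have hrew : ∫ x : ℝ, f x * ψ j k x = ∫ x : ℝ, (f x - f c) * ψ j k x := by
      rw [show (fun x : ℝ => (f x - f c) * ψ j k x)
          = fun x : ℝ => f x * ψ j k x - f c * ψ j k x by funext x; ring,
        integral_sub intfψ intcψ, integral_const_mul, hzero, mul_zero, sub_zero]
    -- the dominating function
    have hcont : Continuous (fun x : ℝ => Hf * (|x - c| ^ r * |ψ j k x|)) := by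
      apply continuous_const.mul
      exact ((continuous_abs.comp (continuous_id.sub continuous_const)).rpow_const
        (fun x => Or.inr hr0.le)).mul (hψcont j k).abs
    have hcsdom : HasCompactSupport (fun x : ℝ => Hf * (|x - c| ^ r * |ψ j k x|)) := by
      apply HasCompactSupport.mul_left
      apply HasCompactSupport.mul_left
      exact (hψcs j k).abs
    have intdom : Integrable (fun x : ℝ => Hf * (|x - c| ^ r * |ψ j k x|)) :=
      hcont.integrable_of_hasCompactSupport hcsdom
    have hpt : ∀ x : ℝ, |(f x - f c) * ψ j k x| ≤ Hf * (|x - c| ^ r * |ψ j k x|) := by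
      intro x
      rw [abs_mul]
      by_cases hx : x = c
      · rw [hx]; simp; positivity
      · have hd : x - c ≠ 0 := sub_ne_zero.mpr hx
        have := hHf c (x - c) hd
        rw [add_sub_cancel] at this
        calc |f x - f c| * |ψ j k x| ≤ (Hf * |x - c| ^ r) * |ψ j k x| :=
              mul_le_mul_of_nonneg_right this (abs_nonneg _)
          _ = Hf * (|x - c| ^ r * |ψ j k x|) := by ring
    have intabs : Integrable (fun x => |(f x - f c) * ψ j k x|) := by
      have := (intfψ.sub intcψ).abs
      simpa [sub_mul] using this
    have hmono : ∫ x : ℝ, |(f x - f c) * ψ j k x|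
        ≤ ∫ x : ℝ, Hf * (|x - c| ^ r * |ψ j k x|) :=
      integral_mono intabs intdom hpt
    have htrans : ∫ x : ℝ, |x - c| ^ r * |ψ j k x|
        = ∫ x : ℝ, |x| ^ r * |ψ j k (x + c)| := by
      have := integral_add_right_eq_self (μ := volume)
        (fun x : ℝ => |x - c| ^ r * |ψ j k x|) c
      rw [← this]
      congr 1
      funext x
      rw [add_sub_cancel_right]
    calc |∫ x : ℝ, f x * ψ j k x| = |∫ x : ℝ, (f x - f c) * ψ j k x| := by rw [hrew]
      _ ≤ ∫ x : ℝ, |(f x - f c) * ψ j k x| := by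
          have h := norm_integral_le_integral_norm (μ := volume)
            (fun x : ℝ => (f x - f c) * ψ j k x)
          simpa [Real.norm_eq_abs, abs_mul] using h
      _ ≤ ∫ x : ℝ, Hf * (|x - c| ^ r * |ψ j k x|) := hmono
      _ = Hf * ∫ x : ℝ, |x - c| ^ r * |ψ j k x| := integral_const_mul _ _
      _ = Hf * ∫ x : ℝ, |x| ^ r * |ψ j k (x + c)| := by rw [htrans]
      _ ≤ Hf * (Cvm * (2:ℝ) ^ (-((j:ℕ):ℝ) * (r + 1/2))) :=
          mul_le_mul_of_nonneg_left (hloc j k) hHf0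
      _ = Cvm * Hf * (2:ℝ) ^ (-((j:ℕ):ℝ) * (r + 1/2)) := by ring
  refine ⟨fun k => (hφb k).trans (by nlinarith), hψb, ?_, ?_⟩
  · refine ⟨max ((Csupp * Cφsup + 1) * Mf) (Cvm * Hf), fun k => ?_, fun j k => ?_⟩
    · exact ((hφb k).trans (by nlinarith)).trans (le_max_left _ _)
    · refine le_trans ?_ (le_max_right _ _)
      have h2pos : (0:ℝ) < (2:ℝ) ^ (((j:ℕ):ℝ) * (r + 1/2)) :=
        Real.rpow_pos_of_pos two_pos _
      have := mul_le_mul_of_nonneg_left (hψb j k) h2pos.le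
      refine this.trans (le_of_eq ?_)
      rw [show -((j:ℕ):ℝ) * (r + 1/2) = -(((j:ℕ):ℝ) * (r + 1/2)) by ring,
        Real.rpow_neg two_pos.le]
      field_simp
  · have hsum := hI (hf.toLp f)
    have heq : (fun i : ℤ ⊕ ℕ+ × ℤ =>
        Sum.elim
          (fun k => (∫ x : ℝ, f x * φ k x) • (hφmem k).toLp (φ k))
          (fun p => (∫ x : ℝ, f x * ψ p.1 p.2 x) • (hψmem p.1 p.2).toLp (ψ p.1 p.2)) i)
        = (fun i : ℤ ⊕ ℕ+ × ℤ =>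
        Sum.elim
          (fun k => (∫ x : ℝ, (hf.toLp f) x * φ k x) • (hφmem k).toLp (φ k))
          (fun p => (∫ x : ℝ, (hf.toLp f) x * ψ p.1 p.2 x) •
            (hψmem p.1 p.2).toLp (ψ p.1 p.2)) i) := by
      funext i
      cases i with
      | inl k =>
        simp only [Sum.elim_inl]
        congr 1
        refine integral_congr_ae ?_
        filter_upwards [hf.coeFn_toLp] with x hx
        rw [hx]
      | inr p =>
        simp only [Sum.elim_inr]
        congr 1
        refine integral_congr_ae ?_
        filter_upwards [hf.coeFn_toLp] with x hx
        rw [hx]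
    rw [heq]
    exact hsum


end FrameReg
end
end

section
/- Let s > 1 and assume ℱ satisfies assumptions (III) and (V). If a = {a_k}_{k∈ℤ} and b = {b_{j,k}}_{j∈ℕ,k∈ℤ} satisfy C_a := sup_k|a_k| < ∞ and C_b := sup_{j∈ℕ} 2^{3j/2} sup_k|b_{j,k}| < ∞, then f = Σ_{k∈ℤ} a_k φ_k + Σ_{j∈ℕ} Σ_{k∈ℤ} b_{j,k} ψ_{j,k} is a well-defined bounded function belonging to the Zygmund class Λ(ℝ), and there is a constant C > 0 depending only on the constants in (III) and (V) such that ‖f‖_∞ + |f|_Λ ≤ C·max(C_a, C_b), where |f|_Λ = sup_{x∈ℝ,h>0} |f(x+h) − 2f(x) + f(x−h)|/h. -/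
set_option maxHeartbeats 1000000


open MeasureTheory Filter ENNReal

noncomputable section

namespace FrameReg

section AuxLemmas
open Real



/-- finite-support tsum bound -/
lemma abs_tsum_le_card_mul {ι : Type*} {f : ι → ℝ} {S : Set ι} (hS : S.Finite)
    (hsupp : ∀ i, f i ≠ 0 → i ∈ S) {M : ℝ} (hM : ∀ i, |f i| ≤ M) :
    |∑' i, f i| ≤ (Nat.card S : ℝ) * M := by
  classical
  have h0 : ∀ i ∉ hS.toFinset, f i = 0 := by
    intro i hi
    by_contra hne
    exact hi (hS.mem_toFinset.2 (hsupp i hne))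
  rw [tsum_eq_sum h0]
  calc |∑ i ∈ hS.toFinset, f i| ≤ ∑ i ∈ hS.toFinset, |f i| := Finset.abs_sum_le_sum_abs _ _
    _ ≤ ∑ _i ∈ hS.toFinset, M := Finset.sum_le_sum fun i _ => hM i
    _ = hS.toFinset.card * M := by rw [Finset.sum_const, nsmul_eq_mul]
    _ = (Nat.card S : ℝ) * M := by
        rw [Nat.card_coe_set_eq, Set.ncard_eq_toFinset_card _ hS]

lemma summable_of_support_subset {ι : Type*} {f : ι → ℝ} {S : Set ι} (hS : S.Finite)
    (hsupp : ∀ i, f i ≠ 0 → i ∈ S) : Summable f := by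
  classical
  exact summable_of_ne_finset_zero (s := hS.toFinset) fun i hi => by
    by_contra hne; exact hi (hS.mem_toFinset.2 (hsupp i hne))

/-- MVT second-difference bound -/
lemma sd_bound {g : ℝ → ℝ} (hg : Differentiable ℝ g) {L β : ℝ} (hL : 0 ≤ L) (hβ : 0 ≤ β)
    (hHol : ∀ u v, u ≠ v → |deriv g u - deriv g v| ≤ L * |u - v| ^ β)
    (x h : ℝ) (hh : 0 < h) :
    |g (x + h) - 2 * g x + g (x - h)| ≤ L * (2 * h) ^ β * h := by
  obtain ⟨ξ₁, hξ₁, hd₁⟩ := exists_hasDerivAt_eq_slope g (deriv g) (by linarith : x < x + h)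
    (hg.continuous.continuousOn) (fun y _ => (hg y).hasDerivAt)
  obtain ⟨ξ₂, hξ₂, hd₂⟩ := exists_hasDerivAt_eq_slope g (deriv g) (by linarith : x - h < x)
    (hg.continuous.continuousOn) (fun y _ => (hg y).hasDerivAt)
  have e1 : g (x + h) - g x = h * deriv g ξ₁ := by
    rw [hd₁, show x + h - x = h by ring]; field_simp
  have e2 : g x - g (x - h) = h * deriv g ξ₂ := by
    rw [hd₂, show x - (x - h) = h by ring]; field_simp
  have key : g (x + h) - 2 * g x + g (x - h) = h * (deriv g ξ₁ - deriv g ξ₂) := by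
    nlinarith [e1, e2]
  rw [key, abs_mul, abs_of_pos hh]
  rcases eq_or_ne ξ₁ ξ₂ with rfl | hne
  · simp only [sub_self, abs_zero, mul_zero]
    positivity
  · have hb : |deriv g ξ₁ - deriv g ξ₂| ≤ L * |ξ₁ - ξ₂| ^ β := hHol _ _ hne
    have hdist : |ξ₁ - ξ₂| ≤ 2 * h := by
      rw [abs_sub_le_iff]
      constructor <;> [skip; skip] <;>
        · obtain ⟨a1, a2⟩ := hξ₁; obtain ⟨b1, b2⟩ := hξ₂; linarith
    have hpow : |ξ₁ - ξ₂| ^ β ≤ (2 * h) ^ β :=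
      Real.rpow_le_rpow (abs_nonneg _) hdist hβ
    calc h * |deriv g ξ₁ - deriv g ξ₂| ≤ h * (L * |ξ₁ - ξ₂| ^ β) := by
          exact mul_le_mul_of_nonneg_left hb hh.le
      _ ≤ h * (L * (2 * h) ^ β) := by
          apply mul_le_mul_of_nonneg_left _ hh.le
          exact mul_le_mul_of_nonneg_left hpow hL
      _ = L * (2 * h) ^ β * h := by ring



lemma series_bound {α h K1 K2 : ℝ} (hα : 0 < α) (hα1 : α ≤ 1) (hh : 0 < h)
    (hK1 : 0 ≤ K1) (hK2 : 0 ≤ K2) {d : ℕ → ℝ} (hd0 : ∀ n, 0 ≤ d n)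
    (hbig : ∀ n, d n ≤ K2 * (1/2 : ℝ)^n)
    (hsmall : ∀ n, (2:ℝ)^n * h ≤ 1 → d n ≤ K1 * ((2:ℝ)^n * h)^α * h) :
    ∑' n, d n ≤ (K1 * 2 / ((2:ℝ)^α - 1) + 2 * K2) * h := by
  have h2α : (1:ℝ) < (2:ℝ)^α := by
    rw [show (1:ℝ) = (2:ℝ) ^ (0:ℝ) by simp]
    exact Real.rpow_lt_rpow_left_iff (by norm_num) |>.2 hα
  have h2α2 : (2:ℝ)^α ≤ 2 := by
    calc (2:ℝ)^α ≤ (2:ℝ)^(1:ℝ) := Real.rpow_le_rpow_of_exponent_le (by norm_num) hα1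
      _ = 2 := by norm_num
  -- existence of m
  have hex : ∃ n : ℕ, 1 < (2:ℝ)^n * h := by
    obtain ⟨n, hn⟩ := pow_unbounded_of_one_lt (1/h) (by norm_num : (1:ℝ) < 2)
    exact ⟨n, by rw [← div_lt_iff₀ hh] at *; linarith [hn]⟩
  classical
  set m := Nat.find hex with hm
  have hPm : 1 < (2:ℝ)^m * h := Nat.find_spec hex
  have hnot : ∀ n < m, (2:ℝ)^n * h ≤ 1 := fun n hn => le_of_not_gt (Nat.find_min hex hn)
  have hsum : Summable d :=
    Summable.of_nonneg_of_le hd0 hbig (((summable_geometric_of_lt_one (by norm_num)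
      (by norm_num : (1/2:ℝ) < 1))).mul_left K2)
  -- split
  have hsplit := Summable.sum_add_tsum_nat_add (f := d) m hsum
  rw [← hsplit]
  -- tail bound
  have htail : ∑' i, d (i + m) ≤ 2 * K2 * h := by
    have hmaj : Summable (fun i : ℕ => K2 * (1/2:ℝ)^(i+m)) := by
      simpa [pow_add] using ((((summable_geometric_of_lt_one (by norm_num)
        (by norm_num : (1/2:ℝ) < 1))).mul_left (K2 * (1/2:ℝ)^m)).congr (fun i => by ring) :
          Summable (fun i : ℕ => K2 * (1/2:ℝ)^(i+m)))
    have h1 : ∑' i, d (i + m) ≤ ∑' i : ℕ, K2 * (1/2:ℝ)^(i+m) :=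
      Summable.tsum_le_tsum (fun i => hbig (i+m)) (hsum.comp_injective (add_left_injective m)) hmaj
    have h2 : ∑' i : ℕ, K2 * (1/2:ℝ)^(i+m) = K2 * (1/2:ℝ)^m * 2 := by
      rw [show (fun i : ℕ => K2 * (1/2:ℝ)^(i+m)) = fun i : ℕ => (K2 * (1/2:ℝ)^m) * (1/2:ℝ)^i from
        funext fun i => by rw [pow_add]; ring]
      rw [tsum_mul_left, tsum_geometric_of_lt_one (by norm_num) (by norm_num)]
      norm_num
    have h3 : (1/2:ℝ)^m < h := by
      have h2m : (0:ℝ) < (2:ℝ)^m := by positivity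
      rw [div_pow, one_pow, div_lt_iff₀ h2m]
      linarith [hPm]
    calc ∑' i, d (i + m) ≤ K2 * (1/2:ℝ)^m * 2 := h1.trans h2.le
      _ ≤ 2 * K2 * h := by nlinarith [h3, pow_nonneg (by norm_num : (0:ℝ) ≤ 1/2) m]
  -- head bound
  have hhead : ∑ n ∈ Finset.range m, d n ≤ K1 * 2 / ((2:ℝ)^α - 1) * h := by
    rcases Nat.eq_zero_or_pos m with hm0 | hm1
    · rw [hm0]; simp
      apply mul_nonneg (div_nonneg (by linarith) (by linarith)) hh.le
    · have hrw : ∀ n : ℕ, ((2:ℝ)^n * h)^α = ((2:ℝ)^α)^n * h^α := by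
        intro n
        rw [Real.mul_rpow (by positivity) hh.le, ← Real.rpow_natCast (2:ℝ) n,
          ← Real.rpow_mul (by norm_num), mul_comm (n:ℝ) α, Real.rpow_mul (by norm_num),
          Real.rpow_natCast]
      have step1 : ∑ n ∈ Finset.range m, d n ≤
          ∑ n ∈ Finset.range m, K1 * h^α * h * ((2:ℝ)^α)^n := by
        apply Finset.sum_le_sum
        intro n hn
        have := hsmall n (hnot n (Finset.mem_range.1 hn))
        rw [hrw n] at this
        linarith [this]
      have step2 : ∑ n ∈ Finset.range m, ((2:ℝ)^α)^n ≤ ((2:ℝ)^α)^m / ((2:ℝ)^α - 1) := by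
        rw [geom_sum_eq (ne_of_gt h2α)]
        apply div_le_div_of_nonneg_right _ (by linarith)
        · linarith [pow_pos (by linarith : (0:ℝ) < (2:ℝ)^α) m]
      have step3 : ((2:ℝ)^α)^m * h^α ≤ (2:ℝ)^α := by
        have hm1' : (2:ℝ)^(m-1) * h ≤ 1 := hnot (m-1) (Nat.sub_lt hm1 one_pos)
        have : (2:ℝ)^m * h ≤ 2 := by
          have : (2:ℝ)^m = 2 * (2:ℝ)^(m-1) := by
            rw [← pow_succ']
            congr 1
            omega
          rw [this]; nlinarith [hm1', hh]
        calc ((2:ℝ)^α)^m * h^α = ((2:ℝ)^m * h)^α := (hrw m).symm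
          _ ≤ (2:ℝ)^α := Real.rpow_le_rpow (by positivity) this hα.le
      have hD : (0:ℝ) < (2:ℝ)^α - 1 := by linarith
      have step4 : ∑ n ∈ Finset.range m, K1 * h^α * h * ((2:ℝ)^α)^n ≤
          K1 * 2 / ((2:ℝ)^α - 1) * h := by
        rw [← Finset.mul_sum]
        rw [div_mul_eq_mul_div, le_div_iff₀ hD]
        have hc : K1 * h ^ α * h * (∑ n ∈ Finset.range m, ((2:ℝ)^α)^n) ≤
            K1 * h ^ α * h * (((2:ℝ)^α)^m / ((2:ℝ)^α - 1)) :=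
          mul_le_mul_of_nonneg_left step2 (by positivity)
        have hc2 : K1 * h ^ α * h * (((2:ℝ)^α)^m / ((2:ℝ)^α - 1)) * ((2:ℝ)^α - 1)
            = K1 * h * (((2:ℝ)^α)^m * h ^ α) := by
          field_simp
        nlinarith [mul_le_mul_of_nonneg_right hc hD.le, hc2,
          mul_le_mul_of_nonneg_left step3 (mul_nonneg hK1 hh.le), h2α2,
          mul_nonneg hK1 hh.le]
      exact step1.trans step4
  linarith


lemma sd_tsum_bound {ι : Type*} (c : ι → ℝ) (g : ι → ℝ → ℝ) (x h : ℝ) {S : Set ι}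
    (hS : S.Finite)
    (hsupp : ∀ i, i ∉ S → g i (x + h) = 0 ∧ g i x = 0 ∧ g i (x - h) = 0)
    {M : ℝ} (hM : ∀ i, |c i| * |g i (x + h) - 2 * g i x + g i (x - h)| ≤ M) :
    |(∑' i, c i * g i (x + h)) - 2 * (∑' i, c i * g i x) + (∑' i, c i * g i (x - h))| ≤
      (Nat.card S : ℝ) * M := by
  classical
  set T := hS.toFinset with hT
  have e1 : (∑' i, c i * g i (x + h)) = ∑ i ∈ T, c i * g i (x + h) :=
    tsum_eq_sum fun i hi => by rw [(hsupp i (by simpa [hT] using hi)).1, mul_zero]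
  have e2 : (∑' i, c i * g i x) = ∑ i ∈ T, c i * g i x :=
    tsum_eq_sum fun i hi => by rw [(hsupp i (by simpa [hT] using hi)).2.1, mul_zero]
  have e3 : (∑' i, c i * g i (x - h)) = ∑ i ∈ T, c i * g i (x - h) :=
    tsum_eq_sum fun i hi => by rw [(hsupp i (by simpa [hT] using hi)).2.2, mul_zero]
  rw [e1, e2, e3]
  have ecomb : (∑ i ∈ T, c i * g i (x + h)) - 2 * (∑ i ∈ T, c i * g i x) +
      (∑ i ∈ T, c i * g i (x - h)) =
      ∑ i ∈ T, c i * (g i (x + h) - 2 * g i x + g i (x - h)) := by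
    rw [Finset.mul_sum, ← Finset.sum_sub_distrib, ← Finset.sum_add_distrib]
    exact Finset.sum_congr rfl fun i _ => by ring
  rw [ecomb]
  calc |∑ i ∈ T, c i * (g i (x + h) - 2 * g i x + g i (x - h))| ≤
      ∑ i ∈ T, |c i * (g i (x + h) - 2 * g i x + g i (x - h))| :=
        Finset.abs_sum_le_sum_abs _ _
    _ ≤ ∑ _i ∈ T, M := Finset.sum_le_sum fun i _ => by rw [abs_mul]; exact hM i
    _ = T.card * M := by rw [Finset.sum_const, nsmul_eq_mul]
    _ = (Nat.card S : ℝ) * M := by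
        rw [Nat.card_coe_set_eq, Set.ncard_eq_toFinset_card _ hS]


end AuxLemmas

/-- the easy direction of Theorem 3.1 for `r = 1`: coefficients
with decay `2^{-3j/2}` produce a bounded function in the Zygmund class, with
quantitative control by `C·max(C_a, C_b)`. -/
theorem statement_16
    (φ : ℤ → ℝ → ℝ) (ψ : ℕ+ → ℤ → ℝ → ℝ)
    (hcs : CompactlySupported φ ψ)
    (s : ℝ) (hs : 1 < s)
    (CΓ : ℝ) (hCΓ : 0 < CΓ)
    (hIII : AssumpIII CΓ φ ψ)
    (hV : AssumpV s φ ψ) :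
    ∃ C > (0:ℝ), ∀ (a : ℤ → ℝ) (b : ℕ+ → ℤ → ℝ) (Ca Cb : ℝ),
      (∀ k, |a k| ≤ Ca) →
      (∀ (j : ℕ+) (k : ℤ), (2:ℝ) ^ (((j:ℕ):ℝ) * (3 / 2)) * |b j k| ≤ Cb) →
      (∀ x : ℝ, {k : ℤ | φ k x ≠ 0}.Finite) ∧
      (∀ x : ℝ, Summable fun p : ℕ+ × ℤ => |b p.1 p.2 * ψ p.1 p.2 x|) ∧
      Bdd (frameSum φ ψ a b) ∧
      MemZygmundClass (frameSum φ ψ a b) ∧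
      ∀ y x h : ℝ, 0 < h →
        |frameSum φ ψ a b y| +
          |frameSum φ ψ a b (x + h) - 2 * frameSum φ ψ a b x +
            frameSum φ ψ a b (x - h)| / h ≤
          C * max Ca Cb := by
  classical
  -- regularity exponent
  set ρ : ℝ := min s (3/2) with hρdef
  have hρ1 : 1 < ρ := lt_min hs (by norm_num)
  have hρs : ρ ≤ s := min_le_left _ _
  have hρ2 : ρ < 2 := lt_of_le_of_lt (min_le_right _ _) (by norm_num)
  have hfρ : ⌊ρ⌋₊ = 1 := by
    rw [Nat.floor_eq_iff (by linarith)]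
    constructor
    · exact_mod_cast hρ1.le
    · push_cast; linarith
  set α : ℝ := ρ - 1 with hαdef
  have hα : 0 < α := by simp only [hαdef]; linarith
  have hα1 : α ≤ 1 := by simp only [hαdef]; linarith
  have h2α : (1:ℝ) < (2:ℝ) ^ α := by
    rw [show (1:ℝ) = (2:ℝ) ^ (0:ℝ) by simp]
    exact Real.rpow_lt_rpow_left_iff (by norm_num) |>.2 hα
  have hD : 0 < (2:ℝ)^α - 1 := by linarith
  -- data from assumption (V)
  obtain ⟨hφC, hψC, hVq⟩ := hV
  obtain ⟨Csm0, hCsm0, hφ0, hψ0⟩ := hVq 0 le_rfl (by linarith)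
  obtain ⟨Csm1, hCsm1, hφ1, hψ1⟩ := hVq ρ (by linarith) hρs
  have h1s : 1 ≤ ⌊s⌋₊ := Nat.le_floor (by exact_mod_cast hs.le)
  have hφdiff : ∀ k, Differentiable ℝ (φ k) :=
    fun k => (hφC k).differentiable (by exact_mod_cast (Nat.one_le_iff_ne_zero.mp h1s))
  have hψdiff : ∀ (j : ℕ+) k, Differentiable ℝ (ψ j k) :=
    fun j k => (hψC j k).differentiable (by exact_mod_cast (Nat.one_le_iff_ne_zero.mp h1s))
  have hφsup : ∀ k x, |φ k x| ≤ Csm0 := by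
    intro k x
    have := (hφ0 k).1 0 (Nat.zero_le _) x
    simpa [iteratedDeriv_zero] using this
  have hψsup : ∀ (j : ℕ+) k x, |ψ j k x| ≤ Csm0 * (2:ℝ) ^ (((j:ℕ):ℝ) * (1/2)) := by
    intro j k x
    have := (hψ0 j k).1 0 (Nat.zero_le _) x
    simpa [iteratedDeriv_zero] using this
  have hφHol : ∀ k u v, u ≠ v → |deriv (φ k) u - deriv (φ k) v| ≤ Csm1 * |u - v| ^ α := by
    intro k u v huv
    have := (hφ1 k).2 u v huv
    rwa [hfρ, iteratedDeriv_one, Nat.cast_one] at this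
  have hψHol : ∀ (j : ℕ+) k u v, u ≠ v →
      |deriv (ψ j k) u - deriv (ψ j k) v| ≤
        (Csm1 * (2:ℝ) ^ (((j:ℕ):ℝ) * (ρ + 1/2))) * |u - v| ^ α := by
    intro j k u v huv
    have := (hψ1 j k).2 u v huv
    rwa [hfρ, iteratedDeriv_one, Nat.cast_one] at this
  -- main constant
  refine ⟨3*CΓ*Csm0 + (CΓ*(6*Csm1+4*Csm0) + (40*CΓ*Csm1/((2:ℝ)^α - 1) + 8*CΓ*Csm0)), ?_, ?_⟩
  · have : 0 ≤ 40*CΓ*Csm1/((2:ℝ)^α - 1) := div_nonneg (by positivity) hD.le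
    nlinarith [mul_pos hCΓ hCsm0, mul_pos hCΓ hCsm1]
  intro a b Ca Cb ha hb
  have hCa : 0 ≤ Ca := (abs_nonneg _).trans (ha 0)
  have hCb : 0 ≤ Cb := le_trans (by positivity) (hb 1 0)
  set M : ℝ := max Ca Cb with hMdef
  have hCaM : Ca ≤ M := le_max_left _ _
  have hCbM : Cb ≤ M := le_max_right _ _
  have hM0 : 0 ≤ M := hCa.trans hCaM
  -- coefficient bound
  have hbb : ∀ (j : ℕ+) k, |b j k| ≤ Cb * (2:ℝ) ^ (-(((j:ℕ):ℝ) * (3/2))) := by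
    intro j k
    have h2p : (0:ℝ) < (2:ℝ) ^ (((j:ℕ):ℝ) * (3/2)) := Real.rpow_pos_of_pos two_pos _
    rw [Real.rpow_neg (by norm_num), ← div_eq_mul_inv, le_div_iff₀ h2p]
    have := hb j k
    linarith [this, mul_comm (|b j k|) ((2:ℝ) ^ (((j:ℕ):ℝ) * (3/2)))]
  have hhalf : ∀ n : ℕ, (2:ℝ) ^ (-(n:ℝ)) = (1/2:ℝ) ^ n := by
    intro n
    rw [Real.rpow_neg (by norm_num), Real.rpow_natCast, one_div, inv_pow]
  -- per-term bound for the ψ series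
  have hterm : ∀ (j : ℕ+) k y, |b j k * ψ j k y| ≤ Cb * Csm0 * (1/2:ℝ) ^ ((j:ℕ)) := by
    intro j k y
    rw [abs_mul]
    calc |b j k| * |ψ j k y| ≤
        (Cb * (2:ℝ) ^ (-(((j:ℕ):ℝ) * (3/2)))) * (Csm0 * (2:ℝ) ^ (((j:ℕ):ℝ) * (1/2))) :=
          mul_le_mul (hbb j k) (hψsup j k y) (abs_nonneg _) (by positivity)
      _ = Cb * Csm0 * ((2:ℝ) ^ (-(((j:ℕ):ℝ) * (3/2))) * (2:ℝ) ^ (((j:ℕ):ℝ) * (1/2))) := by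
          ring
      _ = Cb * Csm0 * (1/2:ℝ) ^ ((j:ℕ)) := by
          rw [← Real.rpow_add (by norm_num : (0:ℝ) < 2),
            show -(((j:ℕ):ℝ) * (3/2)) + ((j:ℕ):ℝ) * (1/2) = -((j:ℕ):ℝ) by ring, hhalf]
  -- support helpers
  have hsuppφ : ∀ (u v y : ℝ), y ∈ Set.Icc u v → ∀ k,
      k ∉ {k : ℤ | (Function.support (φ k) ∩ Set.Icc u v).Nonempty} → φ k y = 0 := by
    intro u v y hy k hk
    by_contra hne
    exact hk ⟨y, Function.mem_support.2 hne, hy⟩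
  have hsuppψ : ∀ (j : ℕ+) (u v y : ℝ), y ∈ Set.Icc u v → ∀ k,
      k ∉ {k : ℤ | (Function.support (ψ j k) ∩ Set.Icc u v).Nonempty} → ψ j k y = 0 := by
    intro j u v y hy k hk
    by_contra hne
    exact hk ⟨y, Function.mem_support.2 hne, hy⟩
  -- finiteness of point supports
  have hfin : ∀ x : ℝ, {k : ℤ | φ k x ≠ 0}.Finite := by
    intro x
    apply ((hIII x x le_rfl).1.1).subset
    intro k hk
    exact ⟨x, Function.mem_support.2 hk, Set.mem_Icc.2 ⟨le_rfl, le_rfl⟩⟩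
  -- point cardinality bounds
  have hptφ : ∀ x : ℝ,
      (Nat.card {k : ℤ | (Function.support (φ k) ∩ Set.Icc x x).Nonempty} : ℝ) ≤ CΓ := by
    intro x
    have := (hIII x x le_rfl).1.2
    simpa using this
  have hptψ : ∀ (j : ℕ+) (x : ℝ),
      (Nat.card {k : ℤ | (Function.support (ψ j k) ∩ Set.Icc x x).Nonempty} : ℝ) ≤ CΓ := by
    intro j x
    have := ((hIII x x le_rfl).2 j).2
    simpa using this
  -- bound on the φ part
  have hΦbd : ∀ y : ℝ, |∑' k : ℤ, a k * φ k y| ≤ CΓ * (Ca * Csm0) := by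
    intro y
    have hb1 := abs_tsum_le_card_mul (hIII y y le_rfl).1.1
      (f := fun k => a k * φ k y)
      (fun k hk => ⟨y, Function.mem_support.2 (right_ne_zero_of_mul hk),
        Set.mem_Icc.2 ⟨le_rfl, le_rfl⟩⟩)
      (M := Ca * Csm0)
      (fun k => by
        rw [abs_mul]
        exact mul_le_mul (ha k) (hφsup k y) (abs_nonneg _) hCa)
    exact hb1.trans (mul_le_mul_of_nonneg_right (hptφ y) (by positivity))
  -- row summability and row bounds for the ψ part
  have hrow_abs_summable : ∀ (j : ℕ+) (y : ℝ), Summable fun k : ℤ => |b j k * ψ j k y| := by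
    intro j y
    apply summable_of_support_subset ((hIII y y le_rfl).2 j).1
    intro k hk
    have : ψ j k y ≠ 0 := by
      intro h0
      apply hk
      simp [h0]
    exact ⟨y, Function.mem_support.2 this, Set.mem_Icc.2 ⟨le_rfl, le_rfl⟩⟩
  have hrow_summable : ∀ (j : ℕ+) (y : ℝ), Summable fun k : ℤ => b j k * ψ j k y :=
    fun j y => (hrow_abs_summable j y).of_abs
  have hrowabs : ∀ (j : ℕ+) (y : ℝ),
      ∑' k : ℤ, |b j k * ψ j k y| ≤ CΓ * (Cb * Csm0 * (1/2:ℝ) ^ ((j:ℕ))) := by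
    intro j y
    have hnn : (0:ℝ) ≤ ∑' k : ℤ, |b j k * ψ j k y| := tsum_nonneg fun _ => abs_nonneg _
    rw [← abs_of_nonneg hnn]
    have hb1 := abs_tsum_le_card_mul ((hIII y y le_rfl).2 j).1
      (f := fun k => |b j k * ψ j k y|)
      (fun k hk => by
        have : ψ j k y ≠ 0 := by
          intro h0; apply hk; simp [h0]
        exact ⟨y, Function.mem_support.2 this, Set.mem_Icc.2 ⟨le_rfl, le_rfl⟩⟩)
      (M := Cb * Csm0 * (1/2:ℝ) ^ ((j:ℕ)))
      (fun k => by rw [abs_abs]; exact hterm j k y)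
    exact hb1.trans (mul_le_mul_of_nonneg_right (hptψ j y) (by positivity))
  have hΨbd : ∀ (j : ℕ+) (y : ℝ),
      |∑' k : ℤ, b j k * ψ j k y| ≤ CΓ * (Cb * Csm0 * (1/2:ℝ) ^ ((j:ℕ))) := by
    intro j y
    have h1 : |∑' k : ℤ, b j k * ψ j k y| ≤ ∑' k : ℤ, |b j k * ψ j k y| := by
      have := norm_tsum_le_tsum_norm (f := fun k : ℤ => b j k * ψ j k y)
        (by simpa only [Real.norm_eq_abs] using hrow_abs_summable j y)
      simpa only [Real.norm_eq_abs] using this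
    exact h1.trans (hrowabs j y)
  -- geometric comparison on ℕ+
  have hgeoN : Summable fun n : ℕ => (1/2:ℝ) ^ n :=
    summable_geometric_of_lt_one (by norm_num) (by norm_num)
  have hgeo : Summable fun j : ℕ+ => (1/2:ℝ) ^ ((j:ℕ)) :=
    hgeoN.comp_injective PNat.coe_injective
  have hgeo_le : ∑' j : ℕ+, (1/2:ℝ) ^ ((j:ℕ)) ≤ 2 := by
    have h1 : ∑' j : ℕ+, (1/2:ℝ) ^ ((j:ℕ)) ≤ ∑' n : ℕ, (1/2:ℝ) ^ n :=
      Summable.tsum_le_tsum_of_inj (fun j : ℕ+ => (j:ℕ)) PNat.coe_injective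
        (fun c _ => by positivity) (fun j => le_rfl) hgeo hgeoN
    rw [tsum_geometric_of_lt_one (by norm_num) (by norm_num)] at h1
    norm_num at h1
    linarith
  -- absolute summability over the product
  have habs_summable : ∀ y : ℝ, Summable fun p : ℕ+ × ℤ => |b p.1 p.2 * ψ p.1 p.2 y| := by
    intro y
    rw [summable_prod_of_nonneg (fun p => abs_nonneg _)]
    refine ⟨fun j => hrow_abs_summable j y, ?_⟩
    apply Summable.of_nonneg_of_le (fun j => tsum_nonneg fun _ => abs_nonneg _)
      (fun j => hrowabs j y)
    exact (hgeo.mul_left (CΓ * (Cb * Csm0))).congr fun j => by ring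
  have hsigned_summable : ∀ y : ℝ, Summable fun p : ℕ+ × ℤ => b p.1 p.2 * ψ p.1 p.2 y :=
    fun y => (habs_summable y).of_abs
  have hΨtot_eq : ∀ y : ℝ,
      (∑' p : ℕ+ × ℤ, b p.1 p.2 * ψ p.1 p.2 y) = ∑' j : ℕ+, ∑' k : ℤ, b j k * ψ j k y :=
    fun y => Summable.tsum_prod' (hsigned_summable y) (fun j => hrow_summable j y)
  have hΨsummable : ∀ y : ℝ, Summable fun j : ℕ+ => ∑' k : ℤ, b j k * ψ j k y := by
    intro y
    apply Summable.of_abs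
    apply Summable.of_nonneg_of_le (fun j => abs_nonneg _) (fun j => hΨbd j y)
    exact (hgeo.mul_left (CΓ * (Cb * Csm0))).congr fun j => by ring
  -- bound on the ψ part of the sum
  have hPbd : ∀ y : ℝ, |∑' p : ℕ+ × ℤ, b p.1 p.2 * ψ p.1 p.2 y| ≤ 2 * CΓ * (Cb * Csm0) := by
    intro y
    have h1 : |∑' p : ℕ+ × ℤ, b p.1 p.2 * ψ p.1 p.2 y| ≤
        ∑' p : ℕ+ × ℤ, |b p.1 p.2 * ψ p.1 p.2 y| := by
      have := norm_tsum_le_tsum_norm (f := fun p : ℕ+ × ℤ => b p.1 p.2 * ψ p.1 p.2 y)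
        (by simpa only [Real.norm_eq_abs] using habs_summable y)
      simpa only [Real.norm_eq_abs] using this
    have h2 : (∑' p : ℕ+ × ℤ, |b p.1 p.2 * ψ p.1 p.2 y|) =
        ∑' j : ℕ+, ∑' k : ℤ, |b j k * ψ j k y| :=
      Summable.tsum_prod' (habs_summable y) (fun j => hrow_abs_summable j y)
    have hrows_summable : Summable fun j : ℕ+ => ∑' k : ℤ, |b j k * ψ j k y| :=
      ((summable_prod_of_nonneg (fun p => abs_nonneg _)).1 (habs_summable y)).2
    have h3 : (∑' j : ℕ+, ∑' k : ℤ, |b j k * ψ j k y|) ≤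
        ∑' j : ℕ+, CΓ * (Cb * Csm0 * (1/2:ℝ) ^ ((j:ℕ))) :=
      Summable.tsum_le_tsum (fun j => hrowabs j y) hrows_summable
        ((hgeo.mul_left (CΓ * (Cb * Csm0))).congr fun j => by ring)
    have h4 : (∑' j : ℕ+, CΓ * (Cb * Csm0 * (1/2:ℝ) ^ ((j:ℕ)))) =
        CΓ * (Cb * Csm0) * ∑' j : ℕ+, (1/2:ℝ) ^ ((j:ℕ)) := by
      rw [← tsum_mul_left]
      exact tsum_congr fun j => by ring
    have h5 : CΓ * (Cb * Csm0) * (∑' j : ℕ+, (1/2:ℝ) ^ ((j:ℕ))) ≤ CΓ * (Cb * Csm0) * 2 :=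
      mul_le_mul_of_nonneg_left hgeo_le (by positivity)
    calc |∑' p : ℕ+ × ℤ, b p.1 p.2 * ψ p.1 p.2 y| ≤
        ∑' p : ℕ+ × ℤ, |b p.1 p.2 * ψ p.1 p.2 y| := h1
      _ = ∑' j : ℕ+, ∑' k : ℤ, |b j k * ψ j k y| := h2
      _ ≤ ∑' j : ℕ+, CΓ * (Cb * Csm0 * (1/2:ℝ) ^ ((j:ℕ))) := h3
      _ = CΓ * (Cb * Csm0) * ∑' j : ℕ+, (1/2:ℝ) ^ ((j:ℕ)) := h4
      _ ≤ CΓ * (Cb * Csm0) * 2 := h5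
      _ = 2 * CΓ * (Cb * Csm0) := by ring
  -- boundedness
  have hbdd : ∀ y : ℝ, |frameSum φ ψ a b y| ≤ 3*CΓ*Csm0*M := by
    intro y
    have h1 := hΦbd y
    have h2 := hPbd y
    have : |frameSum φ ψ a b y| ≤ |∑' k : ℤ, a k * φ k y| +
        |∑' p : ℕ+ × ℤ, b p.1 p.2 * ψ p.1 p.2 y| := by
      simp only [frameSum]
      exact abs_add_le _ _
    have hfacts : CΓ * (Ca * Csm0) + 2 * CΓ * (Cb * Csm0) ≤ 3*CΓ*Csm0*M := by
      nlinarith [mul_pos hCΓ hCsm0, hCaM, hCbM, hM0]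
    linarith
  -- the key second-difference estimate
  have hzyg : ∀ x t : ℝ, 0 < t →
      |frameSum φ ψ a b (x + t) - 2 * frameSum φ ψ a b x + frameSum φ ψ a b (x - t)| ≤
        (CΓ*(6*Csm1+4*Csm0) + (40*CΓ*Csm1/((2:ℝ)^α - 1) + 8*CΓ*Csm0)) * M * t := by
    intro x t ht
    have hxt : x - t ≤ x + t := by linarith
    have hmem1 : x + t ∈ Set.Icc (x-t) (x+t) := Set.mem_Icc.2 ⟨by linarith, le_rfl⟩
    have hmem2 : x ∈ Set.Icc (x-t) (x+t) := Set.mem_Icc.2 ⟨by linarith, by linarith⟩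
    have hmem3 : x - t ∈ Set.Icc (x-t) (x+t) := Set.mem_Icc.2 ⟨le_rfl, by linarith⟩
    -- φ part
    have hΦsd : |(∑' k : ℤ, a k * φ k (x+t)) - 2*(∑' k : ℤ, a k * φ k x) +
        (∑' k : ℤ, a k * φ k (x-t))| ≤ CΓ*(6*Csm1+4*Csm0)*Ca*t := by
      rcases le_or_gt t 1 with ht1 | ht1
      · obtain ⟨hSfin, hScard⟩ := (hIII (x-t) (x+t) hxt).1
        have hcard : (Nat.card {k : ℤ |
            (Function.support (φ k) ∩ Set.Icc (x-t) (x+t)).Nonempty} : ℝ) ≤ 3*CΓ := by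
          refine hScard.trans ?_
          have he : x + t - (x - t) = 2*t := by ring
          rw [he]
          nlinarith
        have hper : ∀ k, |a k| * |φ k (x+t) - 2*φ k x + φ k (x-t)| ≤
            Ca * (Csm1 * 2 * t) := by
          intro k
          have hsd := sd_bound (hφdiff k) hCsm1.le hα.le (hφHol k) x t ht
          have h2t : (2*t)^α ≤ 2 := by
            calc (2*t)^α ≤ (2:ℝ)^α :=
                Real.rpow_le_rpow (by positivity) (by linarith) hα.le
              _ ≤ (2:ℝ)^(1:ℝ) := Real.rpow_le_rpow_of_exponent_le (by norm_num) hα1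
              _ = 2 := by norm_num
          have hstep : |φ k (x+t) - 2*φ k x + φ k (x-t)| ≤ Csm1 * 2 * t := by
            refine hsd.trans ?_
            nlinarith [mul_le_mul_of_nonneg_left h2t hCsm1.le]
          exact mul_le_mul (ha k) hstep (abs_nonneg _) hCa
        have hmain := sd_tsum_bound a φ x t hSfin
          (fun k hk => ⟨hsuppφ _ _ _ hmem1 k hk, hsuppφ _ _ _ hmem2 k hk,
            hsuppφ _ _ _ hmem3 k hk⟩) hper
        refine hmain.trans ?_
        calc (Nat.card {k : ℤ |
            (Function.support (φ k) ∩ Set.Icc (x-t) (x+t)).Nonempty} : ℝ) *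
              (Ca * (Csm1 * 2 * t)) ≤ 3*CΓ * (Ca * (Csm1 * 2 * t)) :=
            mul_le_mul_of_nonneg_right hcard (by positivity)
          _ ≤ CΓ*(6*Csm1+4*Csm0)*Ca*t := by
            nlinarith [mul_nonneg (mul_nonneg (mul_nonneg hCΓ.le hCsm0.le) hCa) ht.le]
      · have h1 := hΦbd (x+t)
        have h2 := hΦbd x
        have h3 := hΦbd (x-t)
        have htri : |(∑' k : ℤ, a k * φ k (x+t)) - 2*(∑' k : ℤ, a k * φ k x) +
            (∑' k : ℤ, a k * φ k (x-t))| ≤ |∑' k : ℤ, a k * φ k (x+t)| +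
            2*|∑' k : ℤ, a k * φ k x| + |∑' k : ℤ, a k * φ k (x-t)| := by
          have h := abs_add_three (∑' k : ℤ, a k * φ k (x+t))
            (-(2*(∑' k : ℤ, a k * φ k x))) (∑' k : ℤ, a k * φ k (x-t))
          rw [abs_neg, abs_mul, abs_two] at h
          simpa [sub_eq_add_neg] using h
        have hfin4 : 4*(CΓ*(Ca*Csm0)) ≤ CΓ*(6*Csm1+4*Csm0)*Ca*t := by
          nlinarith [mul_nonneg (mul_nonneg hCΓ.le hCa) hCsm0.le,
            mul_nonneg (mul_nonneg (mul_nonneg hCΓ.le hCsm1.le) hCa) ht.le,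
            mul_nonneg (mul_nonneg hCΓ.le hCa) hCsm0.le]
        linarith
    -- ψ part
    set Cfun : ℕ+ → ℝ := fun j => (∑' k : ℤ, b j k * ψ j k (x+t)) -
      2*(∑' k : ℤ, b j k * ψ j k x) + (∑' k : ℤ, b j k * ψ j k (x-t)) with hCfundef
    have hCbig : ∀ j : ℕ+, |Cfun j| ≤ 4*CΓ*(Cb*Csm0) * (1/2:ℝ)^((j:ℕ)) := by
      intro j
      have h1 := hΨbd j (x+t)
      have h2 := hΨbd j x
      have h3 := hΨbd j (x-t)
      have htri : |Cfun j| ≤ |∑' k : ℤ, b j k * ψ j k (x+t)| +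
          2*|∑' k : ℤ, b j k * ψ j k x| + |∑' k : ℤ, b j k * ψ j k (x-t)| := by
        have h := abs_add_three (∑' k : ℤ, b j k * ψ j k (x+t))
          (-(2*(∑' k : ℤ, b j k * ψ j k x))) (∑' k : ℤ, b j k * ψ j k (x-t))
        rw [abs_neg, abs_mul, abs_two] at h
        simpa [hCfundef, sub_eq_add_neg] using h
      have : (0:ℝ) ≤ (1/2:ℝ)^((j:ℕ)) := by positivity
      nlinarith
    have hCabs_summable : Summable fun j : ℕ+ => |Cfun j| :=
      Summable.of_nonneg_of_le (fun j => abs_nonneg _) hCbig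
        ((hgeo.mul_left (4*CΓ*(Cb*Csm0))).congr fun j => rfl)
    have hsd_eq : (∑' p : ℕ+ × ℤ, b p.1 p.2 * ψ p.1 p.2 (x+t)) -
        2*(∑' p : ℕ+ × ℤ, b p.1 p.2 * ψ p.1 p.2 x) +
        (∑' p : ℕ+ × ℤ, b p.1 p.2 * ψ p.1 p.2 (x-t)) = ∑' j : ℕ+, Cfun j := by
      rw [hΨtot_eq (x+t), hΨtot_eq x, hΨtot_eq (x-t)]
      have h1 := hΨsummable (x+t)
      have h2 := hΨsummable x
      have h3 := hΨsummable (x-t)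
      have e1 : ∑' j : ℕ+, Cfun j =
          (∑' j : ℕ+, ((∑' k : ℤ, b j k * ψ j k (x+t)) -
            2*(∑' k : ℤ, b j k * ψ j k x))) + ∑' j : ℕ+, ∑' k : ℤ, b j k * ψ j k (x-t) :=
        Summable.tsum_add (h1.sub (h2.mul_left 2)) h3
      have e2 : (∑' j : ℕ+, ((∑' k : ℤ, b j k * ψ j k (x+t)) -
          2*(∑' k : ℤ, b j k * ψ j k x))) =
          (∑' j : ℕ+, ∑' k : ℤ, b j k * ψ j k (x+t)) -
          ∑' j : ℕ+, 2*(∑' k : ℤ, b j k * ψ j k x) := Summable.tsum_sub h1 (h2.mul_left 2)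
      have e3 : (∑' j : ℕ+, 2*(∑' k : ℤ, b j k * ψ j k x)) =
          2 * ∑' j : ℕ+, ∑' k : ℤ, b j k * ψ j k x := tsum_mul_left
      linarith
    have hΨsd : |(∑' p : ℕ+ × ℤ, b p.1 p.2 * ψ p.1 p.2 (x+t)) -
        2*(∑' p : ℕ+ × ℤ, b p.1 p.2 * ψ p.1 p.2 x) +
        (∑' p : ℕ+ × ℤ, b p.1 p.2 * ψ p.1 p.2 (x-t))| ≤
        (20*CΓ*(Cb*Csm1) * 2 / ((2:ℝ)^α - 1) + 2 * (4*CΓ*(Cb*Csm0))) * t := by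
      rw [hsd_eq]
      have habs : |∑' j : ℕ+, Cfun j| ≤ ∑' j : ℕ+, |Cfun j| := by
        have := norm_tsum_le_tsum_norm (f := Cfun)
          (by simpa only [Real.norm_eq_abs] using hCabs_summable)
        simpa only [Real.norm_eq_abs] using this
      refine habs.trans ?_
      have hEq : (∑' j : ℕ+, |Cfun j|) = ∑' n : ℕ, |Cfun n.succPNat| := by
        rw [← Equiv.pnatEquivNat.symm.tsum_eq (fun j : ℕ+ => |Cfun j|)]
        exact tsum_congr fun n => by rw [Equiv.pnatEquivNat_symm_apply]
      rw [hEq]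
      refine series_bound hα hα1 ht (by positivity) (by positivity)
        (fun n => abs_nonneg _) ?_ ?_
      · -- big scales
        intro n
        have h := hCbig n.succPNat
        rw [Nat.succPNat_coe] at h
        refine h.trans ?_
        have hps : (1/2:ℝ)^(n.succ) ≤ (1/2:ℝ)^n := by
          rw [pow_succ]
          nlinarith [pow_nonneg (by norm_num : (0:ℝ) ≤ 1/2) n]
        exact mul_le_mul_of_nonneg_left hps (by positivity)
      · -- small scales
        intro n hn
        set j : ℕ+ := n.succPNat with hjdef
        have hj : ((j:ℕ)) = n + 1 := by
          rw [hjdef, Nat.succPNat_coe]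
        obtain ⟨hSfin, hScard⟩ := (hIII (x-t) (x+t) hxt).2 j
        have hcard : (Nat.card {k : ℤ |
            (Function.support (ψ j k) ∩ Set.Icc (x-t) (x+t)).Nonempty} : ℝ) ≤ 5*CΓ := by
          refine hScard.trans ?_
          have h2j : (2:ℝ)^((j:ℕ)) * (x + t - (x - t)) = 4*((2:ℝ)^n * t) := by
            rw [hj, pow_succ]
            ring
          rw [h2j]
          nlinarith
        -- rpow computations
        have e1 : (2:ℝ)^(-(((j:ℕ):ℝ)*(3/2))) * (2:ℝ)^(((j:ℕ):ℝ)*(ρ+1/2)) =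
            (2:ℝ)^(((j:ℕ):ℝ)*α) := by
          rw [← Real.rpow_add (by norm_num : (0:ℝ) < 2)]
          congr 1
          rw [hαdef]
          ring
        have e2 : (2:ℝ)^(((j:ℕ):ℝ)*α) = ((2:ℝ)^((j:ℕ)))^α := by
          rw [← Real.rpow_natCast 2 ((j:ℕ)), ← Real.rpow_mul (by norm_num : (0:ℝ) ≤ 2)]
        have e3 : ((2:ℝ)^((j:ℕ)))^α * (2*t)^α = (4*((2:ℝ)^n*t))^α := by
          rw [← Real.mul_rpow (by positivity) (by positivity)]
          congr 1
          rw [hj, pow_succ]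
          ring
        have e4 : (4*((2:ℝ)^n*t))^α = (4:ℝ)^α * ((2:ℝ)^n*t)^α :=
          Real.mul_rpow (by norm_num) (by positivity)
        have e5 : (4:ℝ)^α ≤ 4 := by
          calc (4:ℝ)^α ≤ (4:ℝ)^(1:ℝ) :=
              Real.rpow_le_rpow_of_exponent_le (by norm_num) hα1
            _ = 4 := by norm_num
        have hper : ∀ k, |b j k| * |ψ j k (x+t) - 2*ψ j k x + ψ j k (x-t)| ≤
            Cb * Csm1 * (4 * ((2:ℝ)^n*t)^α) * t := by
          intro k
          have hsd := sd_bound (hψdiff j k) (by positivity) hα.le (hψHol j k) x t ht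
          calc |b j k| * |ψ j k (x+t) - 2*ψ j k x + ψ j k (x-t)| ≤
              (Cb * (2:ℝ)^(-(((j:ℕ):ℝ)*(3/2)))) *
                ((Csm1 * (2:ℝ)^(((j:ℕ):ℝ)*(ρ+1/2))) * (2*t)^α * t) :=
              mul_le_mul (hbb j k) hsd (abs_nonneg _) (by positivity)
            _ = Cb * Csm1 * t * (((2:ℝ)^(-(((j:ℕ):ℝ)*(3/2))) *
                (2:ℝ)^(((j:ℕ):ℝ)*(ρ+1/2))) * (2*t)^α) := by ring
            _ = Cb * Csm1 * t * (((2:ℝ)^((j:ℕ)))^α * (2*t)^α) := by rw [e1, e2]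
            _ = Cb * Csm1 * t * ((4:ℝ)^α * ((2:ℝ)^n*t)^α) := by rw [e3, e4]
            _ ≤ Cb * Csm1 * t * (4 * ((2:ℝ)^n*t)^α) := by
                refine mul_le_mul_of_nonneg_left ?_ (by positivity)
                exact mul_le_mul_of_nonneg_right e5 (by positivity)
            _ = Cb * Csm1 * (4 * ((2:ℝ)^n*t)^α) * t := by ring
        have hmain := sd_tsum_bound (b j) (ψ j) x t hSfin
          (fun k hk => ⟨hsuppψ j _ _ _ hmem1 k hk, hsuppψ j _ _ _ hmem2 k hk,
            hsuppψ j _ _ _ hmem3 k hk⟩) hper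
        have hfold : |Cfun j| ≤ (Nat.card {k : ℤ |
            (Function.support (ψ j k) ∩ Set.Icc (x-t) (x+t)).Nonempty} : ℝ) *
            (Cb * Csm1 * (4 * ((2:ℝ)^n*t)^α) * t) := hmain
        refine hfold.trans ?_
        calc (Nat.card {k : ℤ |
            (Function.support (ψ j k) ∩ Set.Icc (x-t) (x+t)).Nonempty} : ℝ) *
              (Cb * Csm1 * (4 * ((2:ℝ)^n*t)^α) * t) ≤
            5*CΓ * (Cb * Csm1 * (4 * ((2:ℝ)^n*t)^α) * t) :=
            mul_le_mul_of_nonneg_right hcard (by positivity)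
          _ = 20*CΓ*(Cb*Csm1) * ((2:ℝ)^n*t)^α * t := by ring
    -- combine
    have hsplit : frameSum φ ψ a b (x + t) - 2 * frameSum φ ψ a b x +
        frameSum φ ψ a b (x - t) =
        ((∑' k : ℤ, a k * φ k (x+t)) - 2*(∑' k : ℤ, a k * φ k x) +
          (∑' k : ℤ, a k * φ k (x-t))) +
        ((∑' p : ℕ+ × ℤ, b p.1 p.2 * ψ p.1 p.2 (x+t)) -
          2*(∑' p : ℕ+ × ℤ, b p.1 p.2 * ψ p.1 p.2 x) +
          (∑' p : ℕ+ × ℤ, b p.1 p.2 * ψ p.1 p.2 (x-t))) := by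
      simp only [frameSum]
      ring
    rw [hsplit]
    have htri := abs_add_le
      ((∑' k : ℤ, a k * φ k (x+t)) - 2*(∑' k : ℤ, a k * φ k x) +
        (∑' k : ℤ, a k * φ k (x-t)))
      ((∑' p : ℕ+ × ℤ, b p.1 p.2 * ψ p.1 p.2 (x+t)) -
        2*(∑' p : ℕ+ × ℤ, b p.1 p.2 * ψ p.1 p.2 x) +
        (∑' p : ℕ+ × ℤ, b p.1 p.2 * ψ p.1 p.2 (x-t)))
    have hφfinal : CΓ*(6*Csm1+4*Csm0)*Ca ≤ CΓ*(6*Csm1+4*Csm0)*M :=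
      mul_le_mul_of_nonneg_left hCaM (by positivity)
    have hψfinal : 20*CΓ*(Cb*Csm1) * 2 / ((2:ℝ)^α - 1) + 2 * (4*CΓ*(Cb*Csm0)) ≤
        (40*CΓ*Csm1/((2:ℝ)^α - 1) + 8*CΓ*Csm0)*M := by
      have hQ : (0:ℝ) ≤ 40*CΓ*Csm1/((2:ℝ)^α - 1) := div_nonneg (by positivity) hD.le
      have hr : 20*CΓ*(Cb*Csm1) * 2 / ((2:ℝ)^α - 1) = (40*CΓ*Csm1/((2:ℝ)^α - 1))*Cb := by
        ring
      rw [hr]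
      nlinarith [mul_le_mul_of_nonneg_left hCbM hQ,
        mul_le_mul_of_nonneg_left hCbM (by positivity : (0:ℝ) ≤ 8*CΓ*Csm0)]
    have hcomb : CΓ*(6*Csm1+4*Csm0)*Ca*t +
        (20*CΓ*(Cb*Csm1) * 2 / ((2:ℝ)^α - 1) + 2 * (4*CΓ*(Cb*Csm0))) * t ≤
        (CΓ*(6*Csm1+4*Csm0) + (40*CΓ*Csm1/((2:ℝ)^α - 1) + 8*CΓ*Csm0)) * M * t := by
      have := mul_le_mul_of_nonneg_right (add_le_add hφfinal hψfinal) ht.le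
      nlinarith [this]
    calc |_ + _| ≤ _ + _ := htri
      _ ≤ CΓ*(6*Csm1+4*Csm0)*Ca*t +
          (20*CΓ*(Cb*Csm1) * 2 / ((2:ℝ)^α - 1) + 2 * (4*CΓ*(Cb*Csm0))) * t :=
        add_le_add hΦsd hΨsd
      _ ≤ _ := hcomb
  -- wrap up
  refine ⟨hfin, habs_summable, ⟨3*CΓ*Csm0*M, hbdd⟩,
    ⟨(CΓ*(6*Csm1+4*Csm0) + (40*CΓ*Csm1/((2:ℝ)^α - 1) + 8*CΓ*Csm0)) * M,
      fun x t ht => hzyg x t ht⟩, ?_⟩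
  intro y x h hh
  have h1 := hbdd y
  have h2 := hzyg x h hh
  have h3 : |frameSum φ ψ a b (x + h) - 2 * frameSum φ ψ a b x +
      frameSum φ ψ a b (x - h)| / h ≤
      (CΓ*(6*Csm1+4*Csm0) + (40*CΓ*Csm1/((2:ℝ)^α - 1) + 8*CΓ*Csm0)) * M := by
    rw [div_le_iff₀ hh]
    exact h2
  have hring : (3*CΓ*Csm0 + (CΓ*(6*Csm1+4*Csm0) + (40*CΓ*Csm1/((2:ℝ)^α - 1) + 8*CΓ*Csm0))) * M
      = 3*CΓ*Csm0*M +
        (CΓ*(6*Csm1+4*Csm0) + (40*CΓ*Csm1/((2:ℝ)^α - 1) + 8*CΓ*Csm0)) * M := by ring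
  linarith


end FrameReg
end
end
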